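/- arXiv:1607.05091 — 2 statements merged into one kernel-verified Lean document; each statement's English description precedes it below -/
import Mathlib

section
/- Let δ and λ be in (0,1). Consider the criterion crit(D) = -∑_{j=1}^{D} ξ(φ_j)² + λDε² for D ∈ [1,N], where, since f = 0, ξ(φ_j) = ε η_j with η_1,…,η_N i.i.d. standard Gaussian variables, and let D̂ be a minimizer of crit over D ∈ [1,N]. If N is large enough (depending only on λ and δ), then P( D̂ ≥ (1−λ)N/2 ) ≥ 1−δ and E[ ‖f̂_{D̂}‖² ] ≥ (1−δ)(1−λ)Nε²/4, where ‖f̂_D‖² = ε² ∑_{j=1}^{D} η_j². -/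
open MeasureTheory ProbabilityTheory Real Finset

noncomputable section

namespace MinPenAux

open Filter Topology
open scoped ENNReal NNReal

lemma aux_harg (x : ℝ) : -(1/2 : ℝ) * x ^ 2 = -x ^ 2 / 2 := by ring

lemma aux_hasDerivAt_negexp (x : ℝ) :
    HasDerivAt (fun y : ℝ => -rexp (-y ^ 2 / 2)) (x * rexp (-x ^ 2 / 2)) x := by
  have h1 : HasDerivAt (fun y : ℝ => -y ^ 2 / 2) (-(2 * x ^ 1) / 2) x := by
    have := ((hasDerivAt_pow 2 x).neg).div_const 2
    simpa using this
  have h2 : HasDerivAt (fun y : ℝ => -rexp (-y ^ 2 / 2)) (-(rexp (-x ^ 2 / 2) * (-(2 * x ^ 1) / 2))) x := (h1.exp).neg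
  convert h2 using 1
  ring

lemma integrable_sq_exp : Integrable (fun x : ℝ => x ^ 2 * rexp (-x ^ 2 / 2)) := by
  have h := integrable_rpow_mul_exp_neg_mul_sq (b := 1/2) (by norm_num)
    (s := ((2:ℕ):ℝ)) (by norm_num)
  refine h.congr (ae_of_all _ fun x => ?_)
  show x ^ ((2:ℕ):ℝ) * rexp (-(1/2) * x ^ 2) = x ^ 2 * rexp (-x ^ 2 / 2)
  rw [Real.rpow_natCast, aux_harg]

lemma integrable_exp_half : Integrable (fun x : ℝ => rexp (-x ^ 2 / 2)) := by
  have := integrable_exp_neg_mul_sq (b := 1/2) (by norm_num)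
  refine this.congr (ae_of_all _ fun x => ?_)
  show rexp (-(1/2) * x ^ 2) = rexp (-x ^ 2 / 2)
  rw [aux_harg]

lemma integrable_mul_exp_half : Integrable (fun x : ℝ => x * rexp (-x ^ 2 / 2)) := by
  have := integrable_mul_exp_neg_mul_sq (b := 1/2) (by norm_num)
  refine this.congr (ae_of_all _ fun x => ?_)
  show x * rexp (-(1/2) * x ^ 2) = x * rexp (-x ^ 2 / 2)
  rw [aux_harg]

lemma integral_sq_exp_half : ∫ x : ℝ, x ^ 2 * rexp (-x ^ 2 / 2) = Real.sqrt (2 * π) := by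
  have hu : ∀ x : ℝ, HasDerivAt (fun y : ℝ => y) 1 x := fun x => hasDerivAt_id x
  have hv := aux_hasDerivAt_negexp
  have huv' : Integrable ((fun y : ℝ => y) * (fun x => x * rexp (-x ^ 2 / 2))) := by
    refine integrable_sq_exp.congr (ae_of_all _ fun x => ?_)
    show x ^ 2 * rexp (-x ^ 2 / 2) = x * (x * rexp (-x ^ 2 / 2))
    ring
  have hu'v : Integrable ((fun _ : ℝ => (1:ℝ)) * (fun y : ℝ => -rexp (-y ^ 2 / 2))) := by
    refine integrable_exp_half.neg.congr (ae_of_all _ fun x => ?_)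
    show -rexp (-x ^ 2 / 2) = 1 * -rexp (-x ^ 2 / 2)
    ring
  have huv : Integrable ((fun y : ℝ => y) * (fun y : ℝ => -rexp (-y ^ 2 / 2))) := by
    refine integrable_mul_exp_half.neg.congr (ae_of_all _ fun x => ?_)
    show -(x * rexp (-x ^ 2 / 2)) = x * -rexp (-x ^ 2 / 2)
    ring
  have key := integral_mul_deriv_eq_deriv_mul_of_integrable (fun x _ => hu x) (fun x _ => hv x) huv' hu'v huv
  have h2 : ∫ x : ℝ, x * (x * rexp (-x ^ 2 / 2)) = ∫ x : ℝ, x ^ 2 * rexp (-x ^ 2 / 2) := by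
    congr 1; funext x; ring
  have h3 : ∫ x : ℝ, (1:ℝ) * (-rexp (-x ^ 2 / 2)) = -∫ x : ℝ, rexp (-x ^ 2 / 2) := by
    rw [← integral_neg]; congr 1; funext x; ring
  have h4 : ∫ x : ℝ, rexp (-x ^ 2 / 2) = Real.sqrt (2 * π) := by
    calc ∫ x : ℝ, rexp (-x ^ 2 / 2) = ∫ x : ℝ, rexp (-(1/2) * x ^ 2) := by
          simp_rw [aux_harg]
      _ = Real.sqrt (π / (1/2)) := integral_gaussian (1/2)
      _ = Real.sqrt (2 * π) := by rw [div_div_eq_mul_div, div_one, mul_comm]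
  rw [h2, h3] at key
  rw [key, h4]
  ring

lemma pdf01 (x : ℝ) : gaussianPDFReal 0 1 x = (Real.sqrt (2*π))⁻¹ * rexp (-x^2/2) := by
  simp [gaussianPDFReal]

lemma gaussian_withDensity :
    gaussianReal 0 1 = volume.withDensity (fun x => ((gaussianPDFReal 0 1 x).toNNReal : ℝ≥0∞)) := by
  rw [gaussianReal_of_var_ne_zero 0 one_ne_zero]; rfl

lemma meas_pdfnn : Measurable (fun x => (gaussianPDFReal 0 1 x).toNNReal) :=
  (measurable_gaussianPDFReal 0 1).real_toNNReal

lemma integral_gaussianReal_eq (g : ℝ → ℝ) :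
    ∫ x, g x ∂(gaussianReal 0 1) = ∫ x, gaussianPDFReal 0 1 x * g x := by
  rw [gaussian_withDensity, integral_withDensity_eq_integral_smul meas_pdfnn g]
  congr 1; funext x
  simp [NNReal.smul_def, Real.coe_toNNReal _ (gaussianPDFReal_nonneg 0 1 x)]

lemma integral_sq_gaussian : ∫ x, x^2 ∂(gaussianReal 0 1) = 1 := by
  rw [integral_gaussianReal_eq]
  have : ∀ x : ℝ, gaussianPDFReal 0 1 x * x^2 = (Real.sqrt (2*π))⁻¹ * (x^2 * rexp (-x^2/2)) := by
    intro x; rw [pdf01]; ring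
  simp_rw [this]
  rw [integral_const_mul, integral_sq_exp_half]
  field_simp

lemma integrable_sq_gaussian : Integrable (fun x : ℝ => x^2) (gaussianReal 0 1) := by
  rw [gaussian_withDensity, integrable_withDensity_iff meas_pdfnn.coe_nnreal_ennreal
    (ae_of_all _ fun x => ENNReal.coe_lt_top)]
  refine (integrable_sq_exp.const_mul ((Real.sqrt (2*π))⁻¹)).congr (ae_of_all _ fun x => ?_)
  show (Real.sqrt (2*π))⁻¹ * (x^2 * rexp (-x^2/2)) = x^2 * ((_ : ℝ≥0∞)).toReal
  rw [ENNReal.coe_toReal, Real.coe_toNNReal _ (gaussianPDFReal_nonneg 0 1 x), pdf01]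
  ring

lemma integrable_min_sq_gaussian (K : ℝ) :
    Integrable (fun x : ℝ => min (x^2) K) (gaussianReal 0 1) := by
  rcases le_or_gt K 0 with hK | hK
  · exact (integrable_const K).congr
      (ae_of_all _ fun x => (min_eq_right ((hK.trans (sq_nonneg x)))).symm)
  · refine (integrable_const K).mono' ((measurable_id.pow_const 2).min
      measurable_const).aestronglyMeasurable (ae_of_all _ fun x => ?_)
    rw [Real.norm_eq_abs, abs_le]
    constructor
    · have : (0:ℝ) ≤ min (x^2) K := le_min (sq_nonneg x) hK.le
      linarith
    · exact min_le_right _ _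

lemma exists_trunc (γ : ℝ) (hγ : γ < 1) :
    ∃ K : ℕ, 1 ≤ K ∧ γ < ∫ x, min (x^2) (K:ℝ) ∂(gaussianReal 0 1) := by
  have htend : Tendsto (fun n : ℕ => ∫ x, min (x^2) (n:ℝ) ∂(gaussianReal 0 1)) atTop
      (𝓝 (∫ x, x^2 ∂(gaussianReal 0 1))) := by
    refine integral_tendsto_of_tendsto_of_monotone
      (fun n => integrable_min_sq_gaussian (n:ℝ)) integrable_sq_gaussian
      (ae_of_all _ fun x => ?_) (ae_of_all _ fun x => ?_)
    · intro a b hab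
      exact min_le_min le_rfl (by exact_mod_cast hab)
    · refine tendsto_atTop_of_eventually_const (i₀ := ⌈x^2⌉₊) fun n hn => ?_
      exact min_eq_left ((Nat.le_ceil (x^2)).trans (by exact_mod_cast hn))
  rw [integral_sq_gaussian] at htend
  obtain ⟨K, hK1, hK2⟩ := ((htend.eventually (eventually_gt_nhds hγ)).and
    (eventually_ge_atTop 1)).exists
  exact ⟨K, hK2, hK1⟩

variable {Ω : Type} [MeasurableSpace Ω] {P : Measure Ω} [IsProbabilityMeasure P]
  {η : ℕ → Ω → ℝ}

omit [IsProbabilityMeasure P] in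
lemma sq_preimage_null (hmeas : ∀ j, Measurable (η j))
    (hmap : ∀ j, Measure.map (η j) P = gaussianReal 0 1) (k : ℕ) (t : ℝ) :
    P {ω | (η k ω)^2 = t} = 0 := by
  have hset : MeasurableSet {x : ℝ | x^2 = t} :=
    (measurable_id.pow_const 2) (measurableSet_singleton t)
  have h1 : {ω | (η k ω)^2 = t} = η k ⁻¹' {x | x^2 = t} := rfl
  rw [h1, ← Measure.map_apply (hmeas k) hset, hmap k]
  refine gaussianReal_absolutelyContinuous 0 one_ne_zero ?_
  refine measure_mono_null (fun x hx => ?_) (Set.Countable.measure_zero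
    ((Set.countable_singleton (Real.sqrt t)).insert (-Real.sqrt t)) volume)
  have habs : |x| = Real.sqrt t := by
    rw [← Real.sqrt_sq_eq_abs, hx]
  rcases abs_cases x with ⟨h, _⟩ | ⟨h, _⟩
  · right; rw [Set.mem_singleton_iff, ← habs, h]
  · left; rw [← habs, h]; ring

lemma sum_sq_eq_null (hmeas : ∀ j, Measurable (η j))
    (hmap : ∀ j, Measure.map (η j) P = gaussianReal 0 1)
    (hind : iIndepFun η P)
    (s : Finset ℕ) (hs : s.Nonempty) (c : ℝ) :
    P {ω | ∑ j ∈ s, (η j ω)^2 = c} = 0 := by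
  classical
  set k := s.max' hs with hk_def
  have hk : k ∈ s := s.max'_mem hs
  set s' := s.erase k with hs'_def
  set ηsq : ℕ → Ω → ℝ := fun j ω => (η j ω)^2 with hηsq_def
  have hmsq : ∀ j, Measurable (ηsq j) := fun j => (hmeas j).pow_const 2
  have hindsq : iIndepFun ηsq P :=
    hind.comp (fun _ x => x^2) (fun _ => measurable_id.pow_const 2)
  set R : Ω → ℝ := fun ω => ∑ j ∈ s', (η j ω)^2 with hR_def
  set X : Ω → ℝ := fun ω => (η k ω)^2 with hX_def
  have hReq : (∑ j ∈ s', ηsq j) = R := by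
    funext ω; simp [hR_def, hηsq_def, Finset.sum_apply]
  have hRX : IndepFun R X P := by
    have := hindsq.indepFun_finset_sum_of_notMem hmsq (Finset.notMem_erase k s)
    rwa [hReq] at this
  have hRm : Measurable R := Finset.measurable_sum _ (fun j _ => (hmeas j).pow_const 2)
  have hXm : Measurable X := (hmeas k).pow_const 2
  have hsetm : MeasurableSet {p : ℝ × ℝ | p.1 + p.2 = c} :=
    (measurable_fst.add measurable_snd) (measurableSet_singleton c)
  have hev : {ω | ∑ j ∈ s, (η j ω)^2 = c}
      = (fun ω => (R ω, X ω)) ⁻¹' {p : ℝ × ℝ | p.1 + p.2 = c} := by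
    ext ω
    simp only [Set.mem_setOf_eq, Set.mem_preimage]
    rw [← Finset.sum_erase_add s _ hk]
  have : IsProbabilityMeasure (P.map X) := Measure.isProbabilityMeasure_map hXm.aemeasurable
  rw [hev, ← Measure.map_apply (hRm.prodMk hXm) hsetm,
    (indepFun_iff_map_prod_eq_prod_map_map hRm.aemeasurable hXm.aemeasurable).mp hRX,
    Measure.prod_apply hsetm]
  have hinner : ∀ x : ℝ, (P.map X) (Prod.mk x ⁻¹' {p : ℝ × ℝ | p.1 + p.2 = c}) = 0 := by
    intro x
    have h2 : (Prod.mk x ⁻¹' {p : ℝ × ℝ | p.1 + p.2 = c}) = {c - x} := by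
      ext y
      simp only [Set.mem_preimage, Set.mem_setOf_eq, Set.mem_singleton_iff]
      constructor <;> intro h <;> linarith
    rw [h2, Measure.map_apply hXm (measurableSet_singleton _)]
    exact sq_preimage_null hmeas hmap k (c - x)
  have h0 : ∀ x : ℝ, (P.map X) {a | x + a = c} = 0 := fun x => hinner x
  simp [h0]

end MinPenAux

/-- The penalized criterion `crit(D) = -ε² ∑_{j<D} η_j² + λ D ε²`
(here `ξ(φ_j) = ε η_j` since `f = 0`). -/
def critGauss (lam ε : ℝ) (η : ℕ → ℝ) (D : ℕ) : ℝ :=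
  -(ε ^ 2 * ∑ j ∈ Finset.range D, (η j) ^ 2) + lam * D * ε ^ 2

set_option maxHeartbeats 1000000 in
theorem minimal_penalty_explosion
    (δ lam : ℝ) (hδ : δ ∈ Set.Ioo (0 : ℝ) 1) (hlam : lam ∈ Set.Ioo (0 : ℝ) 1) :
    ∃ N₀ : ℕ, ∀ N : ℕ, N₀ ≤ N →
      ∀ (Ω : Type) (_ : MeasurableSpace Ω) (P : Measure Ω),
        IsProbabilityMeasure P →
        ∀ (η : ℕ → Ω → ℝ),
          (∀ j, Measurable (η j)) →
          (∀ j, Measure.map (η j) P = gaussianReal 0 1) →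
          iIndepFun η P →
          ∀ (ε : ℝ), 0 < ε →
          ∀ (Dhat : Ω → ℕ),
            (∀ ω, Dhat ω ∈ Finset.Icc 1 N ∧
              ∀ D ∈ Finset.Icc 1 N,
                critGauss lam ε (fun j => η j ω) (Dhat ω) ≤
                  critGauss lam ε (fun j => η j ω) D) →
            P {ω | ((1 - lam) / 2) * N ≤ (Dhat ω : ℝ)} ≥ ENNReal.ofReal (1 - δ) ∧
            (1 - δ) * (1 - lam) / 4 * N * ε ^ 2 ≤
              ∫ ω, ε ^ 2 * ∑ j ∈ Finset.range (Dhat ω), (η j ω) ^ 2 ∂P := by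
  classical
  obtain ⟨hδ0, hδ1⟩ := hδ
  obtain ⟨hlam0, hlam1⟩ := hlam
  have h1lam : (0:ℝ) < 1 + lam := by linarith
  have h1lamN : (0:ℝ) < 1 - lam := by linarith
  set γ : ℝ := (1 + 2*lam/(1+lam))/2 with hγ_def
  have hγlt1 : γ < 1 := by
    rw [hγ_def]
    have : 2*lam/(1+lam) < 1 := by rw [div_lt_one h1lam]; linarith
    linarith
  have hγnn : (0:ℝ) ≤ γ := by rw [hγ_def]; positivity
  have hγle1 : γ ≤ 1 := hγlt1.le
  have hγkey : γ * ((1+lam)/2) = (1+3*lam)/4 := by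
    rw [hγ_def]
    field_simp
    ring
  obtain ⟨K, hK1, hKγ⟩ := MinPenAux.exists_trunc γ hγlt1
  set μK : ℝ := ∫ x, min (x^2) (K:ℝ) ∂(gaussianReal 0 1) with hμK_def
  have hμKnn : 0 ≤ μK := hγnn.trans hKγ.le
  refine ⟨max 2 (max ⌈(8:ℝ)/(1-lam)⌉₊ ⌈(64:ℝ)*(K:ℝ)^2/((1-lam)^2*δ)⌉₊),
    fun N hN Ω mΩ P hP η hmeas hmap hind ε hε Dhat hDhat => ?_⟩
  have hN2 : 2 ≤ N := le_trans (le_max_left _ _) hN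
  have hN1 : 1 ≤ N := le_trans (by norm_num) hN2
  have hN0 : (0:ℝ) < N := by exact_mod_cast lt_of_lt_of_le (by norm_num) hN2
  have hNr : (8:ℝ)/(1-lam) ≤ N := by
    have h := le_trans (le_trans (le_max_left _ _) (le_max_right 2 _)) hN
    exact_mod_cast Nat.ceil_le.mp h
  have hNδ : (64:ℝ)*(K:ℝ)^2/((1-lam)^2*δ) ≤ N := by
    have h := le_trans (le_trans (le_max_right _ _) (le_max_right 2 _)) hN
    exact_mod_cast Nat.ceil_le.mp h
  have hε2 : (0:ℝ) < ε^2 := by positivity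
  -- partial sums
  set S : ℕ → Ω → ℝ := fun D ω => ∑ j ∈ Finset.range D, (η j ω)^2 with hS_def
  have hSmeas : ∀ D, Measurable (S D) :=
    fun D => Finset.measurable_sum _ fun j _ => (hmeas j).pow_const 2
  have hcrit : ∀ D (ω : Ω), critGauss lam ε (fun j => η j ω) D
      = -(ε^2 * S D ω) + lam * D * ε^2 := fun D ω => rfl
  -- threshold
  set r : ℝ := (1-lam)/2 * N with hr_def
  have hrnn : 0 ≤ r := by rw [hr_def]; positivity
  set D₀ : ℕ := ⌈r⌉₊ with hD₀_def
  have hD₀N : D₀ ≤ N := by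
    rw [hD₀_def, Nat.ceil_le, hr_def]
    nlinarith
  have hrD₀ : r ≤ (D₀:ℝ) := Nat.le_ceil r
  have hD₀r : (D₀:ℝ) < r + 1 := Nat.ceil_lt_add_one hrnn
  set m : ℕ := N - D₀ with hm_def
  have hmcast : (m:ℝ) = (N:ℝ) - (D₀:ℝ) := by
    rw [hm_def]; exact Nat.cast_sub hD₀N
  have hmlb : (1+lam)*N/2 - 1 ≤ (m:ℝ) := by
    rw [hmcast]
    rw [hr_def] at hD₀r
    linarith
  -- truncated variables
  set ζ : ℕ → Ω → ℝ := fun j ω => min ((η j ω)^2) (K:ℝ) with hζ_def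
  have hζmeas : ∀ j, Measurable (ζ j) :=
    fun j => ((hmeas j).pow_const 2).min measurable_const
  have hζnn : ∀ j ω, 0 ≤ ζ j ω := fun j ω => le_min (sq_nonneg _) (by positivity)
  have hζleK : ∀ j ω, ζ j ω ≤ (K:ℝ) := fun j ω => min_le_right _ _
  have hζ2 : ∀ j, MemLp (ζ j) 2 P := by
    intro j
    refine (memLp_top_of_bound (hζmeas j).aestronglyMeasurable (K:ℝ)
      (ae_of_all _ fun ω => ?_)).mono_exponent le_top
    rw [Real.norm_eq_abs, abs_of_nonneg (hζnn j ω)]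
    exact hζleK j ω
  have hζint : ∀ j, Integrable (ζ j) P := fun j => (hζ2 j).integrable one_le_two
  have hEζ : ∀ j, ∫ ω, ζ j ω ∂P = μK := by
    intro j
    have hgm : AEStronglyMeasurable (fun x : ℝ => min (x^2) (K:ℝ)) (Measure.map (η j) P) := by
      apply Measurable.aestronglyMeasurable
      fun_prop
    rw [hμK_def, ← hmap j, integral_map (hmeas j).aemeasurable hgm]
  set Z : Ω → ℝ := fun ω => ∑ j ∈ Finset.Ico D₀ N, ζ j ω with hZ_def
  have hZeq : Z = ∑ j ∈ Finset.Ico D₀ N, ζ j := by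
    funext ω; simp [hZ_def, Finset.sum_apply]
  have hZmeas : Measurable Z := Finset.measurable_sum _ fun j _ => hζmeas j
  have hZ2 : MemLp Z 2 P := by
    rw [hZeq]; exact memLp_finset_sum' _ fun j _ => hζ2 j
  have hEZ : ∫ ω, Z ω ∂P = (m:ℝ) * μK := by
    have h1 : ∫ ω, Z ω ∂P = ∑ j ∈ Finset.Ico D₀ N, ∫ ω, ζ j ω ∂P := by
      simp only [hZ_def]
      exact integral_finset_sum _ fun j _ => hζint j
    rw [h1, Finset.sum_congr rfl fun j _ => hEζ j, Finset.sum_const, Nat.card_Ico,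
      nsmul_eq_mul, ← hm_def]
  have hpair : Set.Pairwise ↑(Finset.Ico D₀ N) fun i j => IndepFun (ζ i) (ζ j) P := by
    intro i _ j _ hij
    exact (hind.comp (fun _ x => min (x^2) (K:ℝ))
      (fun _ => (measurable_id.pow_const 2).min measurable_const)).indepFun hij
  have hvar : variance Z P = ∑ j ∈ Finset.Ico D₀ N, variance (ζ j) P := by
    rw [hZeq]
    exact IndepFun.variance_sum (fun j _ => hζ2 j) hpair
  have hvarζ : ∀ j, variance (ζ j) P ≤ (K:ℝ)^2 := by
    intro j
    rw [variance_eq_sub (hζ2 j)]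
    have h1 : (∫ ω, (ζ j ^ 2) ω ∂P) ≤ (K:ℝ)^2 := by
      have h2 := integral_mono ((hζ2 j).integrable_sq) (integrable_const ((K:ℝ)^2))
        (fun ω => by
          show ζ j ω ^ 2 ≤ (K:ℝ)^2
          exact pow_le_pow_left₀ (hζnn j ω) (hζleK j ω) 2)
      simpa using h2
    have h3 := sq_nonneg (∫ ω, ζ j ω ∂P)
    calc (∫ ω, (ζ j ^ 2) ω ∂P) - (∫ ω, ζ j ω ∂P)^2 ≤ (∫ ω, (ζ j ^ 2) ω ∂P) := by linarith
      _ ≤ (K:ℝ)^2 := h1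
  have hVZ : variance Z P ≤ (N:ℝ) * (K:ℝ)^2 := by
    rw [hvar]
    calc ∑ j ∈ Finset.Ico D₀ N, variance (ζ j) P
        ≤ (Finset.Ico D₀ N).card • (K:ℝ)^2 :=
          Finset.sum_le_card_nsmul _ _ _ (fun j _ => hvarζ j)
      _ = (m:ℝ) * (K:ℝ)^2 := by rw [Nat.card_Ico, nsmul_eq_mul, ← hm_def]
      _ ≤ (N:ℝ) * (K:ℝ)^2 := by
          have hm : (m:ℝ) ≤ (N:ℝ) := by
            rw [hmcast]
            have : (0:ℝ) ≤ (D₀:ℝ) := Nat.cast_nonneg D₀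
            linarith
          nlinarith [sq_nonneg (K:ℝ)]
  set c' : ℝ := (1-lam)*N/4 - 1 with hc'_def
  have h8 : (8:ℝ) ≤ (1-lam)*N := by
    rw [div_le_iff₀ h1lamN] at hNr
    linarith
  have hc'lb : (1-lam)*N/8 ≤ c' := by rw [hc'_def]; linarith
  have hc'pos : 0 < c' := lt_of_lt_of_le (by nlinarith) hc'lb
  have cheb := meas_ge_le_variance_div_sq (μ := P) hZ2 hc'pos
  have hratio : variance Z P / c'^2 ≤ δ := by
    rw [div_le_iff₀ (by positivity : (0:ℝ) < c'^2)]
    have hNbig : 64*(K:ℝ)^2 ≤ (1-lam)^2*δ*N := by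
      rw [div_le_iff₀ (by positivity)] at hNδ
      nlinarith [hNδ]
    have hc2 : ((1-lam)*N/8)^2 ≤ c'^2 := pow_le_pow_left₀ (by positivity) hc'lb 2
    calc variance Z P ≤ (N:ℝ) * (K:ℝ)^2 := hVZ
      _ ≤ δ * ((1-lam)*N/8)^2 := by
          linarith [mul_le_mul_of_nonneg_right hNbig hN0.le]
      _ ≤ δ * c'^2 := mul_le_mul_of_nonneg_left hc2 hδ0.le
  have hBmeas : MeasurableSet {ω | c' ≤ |Z ω - ∫ x, Z x ∂P|} :=
    measurableSet_le measurable_const ((hZmeas.sub measurable_const).abs)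
  -- expectation lower bound from EZ
  have hEZlb : lam * N + c' ≤ ∫ x, Z x ∂P := by
    rw [hEZ]
    have h1 : ((1+lam)*N/2 - 1) * γ ≤ (m:ℝ) * μK :=
      mul_le_mul hmlb hKγ.le hγnn (Nat.cast_nonneg m)
    have h3 : ((1+lam)*N/2 - 1) * γ = (1+3*lam)/4 * N - γ := by
      have h4 : γ * ((1+lam)/2) * N = (1+3*lam)/4 * N := by rw [hγkey]
      linear_combination h4
    rw [hc'_def]
    linarith [hγle1]
  -- inclusion
  have hincl : {ω | ((1 - lam) / 2) * (N:ℝ) ≤ (Dhat ω : ℝ)}ᶜ ⊆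
      {ω | c' ≤ |Z ω - ∫ x, Z x ∂P|} := by
    intro ω hω
    simp only [Set.mem_compl_iff, Set.mem_setOf_eq, not_le] at hω
    obtain ⟨hDmem, hmin⟩ := hDhat ω
    have hDhatD₀ : Dhat ω ≤ D₀ := by
      have h1 : (Dhat ω : ℝ) < (D₀:ℝ) := lt_of_lt_of_le (by rw [hr_def] at hrD₀ ⊢; exact hω) hrD₀
      exact_mod_cast h1.le
    have hminN := hmin N (Finset.mem_Icc.mpr ⟨hN1, le_rfl⟩)
    rw [hcrit, hcrit] at hminN
    have hDhatN : Dhat ω ≤ N := (Finset.mem_Icc.mp hDmem).2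
    have hkey : ∑ j ∈ Finset.Ico D₀ N, (η j ω)^2 ≤ lam * N := by
      have hsub : ∑ j ∈ Finset.Ico D₀ N, (η j ω)^2 ≤ ∑ j ∈ Finset.Ico (Dhat ω) N, (η j ω)^2 :=
        Finset.sum_le_sum_of_subset_of_nonneg (Finset.Ico_subset_Ico hDhatD₀ le_rfl)
          (fun j _ _ => sq_nonneg _)
      have hIco : ∑ j ∈ Finset.Ico (Dhat ω) N, (η j ω)^2 = S N ω - S (Dhat ω) ω :=
        Finset.sum_Ico_eq_sub _ hDhatN
      have hd : S N ω - S (Dhat ω) ω ≤ lam * N - lam * (Dhat ω) := by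
        nlinarith [hminN, hε2]
      have hDge : (0:ℝ) ≤ (Dhat ω : ℝ) := Nat.cast_nonneg _
      nlinarith [hlam0]
    have hZω : Z ω ≤ lam * N := by
      refine le_trans ?_ hkey
      exact Finset.sum_le_sum fun j _ => min_le_left _ _
    show c' ≤ |Z ω - ∫ x, Z x ∂P|
    refine le_abs.mpr (Or.inr ?_)
    linarith [hEZlb]
  constructor
  · -- probability bound
    have hPB : P {ω | c' ≤ |Z ω - ∫ x, Z x ∂P|} ≤ ENNReal.ofReal δ :=
      le_trans cheb (ENNReal.ofReal_le_ofReal hratio)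
    have h1 : P {ω | c' ≤ |Z ω - ∫ x, Z x ∂P|}ᶜ ≤
        P {ω | ((1 - lam) / 2) * (N:ℝ) ≤ (Dhat ω : ℝ)} := by
      refine measure_mono fun ω hω => ?_
      by_contra hc
      exact hω (hincl hc)
    refine le_trans ?_ h1
    rw [prob_compl_eq_one_sub hBmeas]
    have h2 : ENNReal.ofReal (1-δ) = 1 - ENNReal.ofReal δ := by
      rw [ENNReal.ofReal_sub _ hδ0.le, ENNReal.ofReal_one]
    rw [h2]
    exact tsub_le_tsub_left hPB 1
  · -- expectation bound
    set T : Set Ω := ⋃ (D : ℕ) (D' : ℕ),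
      {ω | D < D' ∧ D' ≤ N ∧ ∑ j ∈ Finset.Ico D D', (η j ω)^2 = lam * ((D':ℝ) - (D:ℝ))}
      with hT_def
    have hTnull : P T = 0 := by
      rw [hT_def]
      refine measure_iUnion_null fun D => measure_iUnion_null fun D' => ?_
      by_cases hDD' : D < D'
      · exact measure_mono_null (fun ω hω => hω.2.2)
          (MinPenAux.sum_sq_eq_null hmeas hmap hind _ (Finset.nonempty_Ico.mpr hDD') _)
      · exact measure_mono_null (t := (∅ : Set Ω)) (fun ω hω => (hDD' hω.1).elim) measure_empty
    have huniq : ∀ ω, ω ∉ T → ∀ D ∈ Finset.Icc 1 N,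
        critGauss lam ε (fun j => η j ω) D = critGauss lam ε (fun j => η j ω) (Dhat ω) →
        D = Dhat ω := by
      intro ω hωT D hD heq
      by_contra hne
      have hDhatN : Dhat ω ≤ N := (Finset.mem_Icc.mp (hDhat ω).1).2
      have hDN : D ≤ N := (Finset.mem_Icc.mp hD).2
      rw [hcrit, hcrit] at heq
      rcases lt_or_gt_of_ne hne with hlt | hgt
      · apply hωT
        rw [hT_def]
        refine Set.mem_iUnion.mpr ⟨D, Set.mem_iUnion.mpr ⟨Dhat ω, ⟨hlt, hDhatN, ?_⟩⟩⟩
        have hsub : ∑ j ∈ Finset.Ico D (Dhat ω), (η j ω)^2 = S (Dhat ω) ω - S D ω :=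
          Finset.sum_Ico_eq_sub _ hlt.le
        rw [hsub]
        have h5 : ε^2 * (S (Dhat ω) ω - S D ω) = ε^2 * (lam * ((Dhat ω:ℝ) - (D:ℝ))) := by
          linarith [heq]
        exact mul_left_cancel₀ (ne_of_gt hε2) h5
      · apply hωT
        rw [hT_def]
        refine Set.mem_iUnion.mpr ⟨Dhat ω, Set.mem_iUnion.mpr ⟨D, ⟨hgt, hDN, ?_⟩⟩⟩
        have hsub : ∑ j ∈ Finset.Ico (Dhat ω) D, (η j ω)^2 = S D ω - S (Dhat ω) ω :=
          Finset.sum_Ico_eq_sub _ hgt.le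
        rw [hsub]
        have h5 : ε^2 * (S D ω - S (Dhat ω) ω) = ε^2 * (lam * ((D:ℝ) - (Dhat ω:ℝ))) := by
          linarith [heq]
        exact mul_left_cancel₀ (ne_of_gt hε2) h5
    set crit : ℕ → Ω → ℝ := fun D ω => critGauss lam ε (fun j => η j ω) D with hcritf_def
    have hcritmeas : ∀ D, Measurable (crit D) := by
      intro D
      have h : crit D = fun ω => -(ε^2 * S D ω) + lam * D * ε^2 := rfl
      rw [h]
      exact (((hSmeas D).const_mul _).neg).add_const _
    set M : ℕ → Set Ω := fun D => {ω | ∀ D' ∈ Finset.Icc 1 N, crit D ω ≤ crit D' ω} with hM_def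
    have hMmeas : ∀ D, MeasurableSet (M D) := by
      intro D
      have h : M D = ⋂ D' ∈ Finset.Icc 1 N, {ω | crit D ω ≤ crit D' ω} := by
        ext ω; simp [hM_def]
      rw [h]
      exact MeasurableSet.biInter (Finset.Icc 1 N : Finset ℕ).countable_toSet
        (fun D' _ => measurableSet_le (hcritmeas D) (hcritmeas D'))
    set g : Ω → ℝ := fun ω => ε^2 * S (Dhat ω) ω with hg_def
    set g' : Ω → ℝ := fun ω => ∑ D ∈ Finset.Icc 1 N,
      (M D).indicator (fun ω' => ε^2 * S D ω') ω with hg'_def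
    have hg'meas : Measurable g' :=
      Finset.measurable_sum _ fun D _ => (((hSmeas D).const_mul _).indicator (hMmeas D))
    have haeeq : g =ᵐ[P] g' := by
      refine (ae_iff).mpr (measure_mono_null (fun ω hω => ?_) hTnull)
      simp only [Set.mem_setOf_eq] at hω
      by_contra hωT
      apply hω
      obtain ⟨hDmem, hmin⟩ := hDhat ω
      have hval : g' ω = ε^2 * S (Dhat ω) ω := by
        show (∑ D ∈ Finset.Icc 1 N, (M D).indicator (fun ω' => ε^2 * S D ω') ω)
          = ε^2 * S (Dhat ω) ω
        rw [Finset.sum_eq_single_of_mem (Dhat ω) hDmem ?side]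
        · exact Set.indicator_of_mem
            (show ω ∈ M (Dhat ω) from fun D' hD' => hmin D' hD') _
        case side =>
          intro D hD hne
          refine Set.indicator_of_notMem (fun hωM => ?_) _
          have h1 : crit D ω ≤ crit (Dhat ω) ω := hωM (Dhat ω) hDmem
          have h2 : crit (Dhat ω) ω ≤ crit D ω := hmin D hD
          exact hne (huniq ω hωT D hD (le_antisymm h1 h2))
      rw [hg_def, hval]
    have hη2int : ∀ j, Integrable (fun ω => (η j ω)^2) P := by
      intro j
      refine (integrable_map_measure (g := fun x : ℝ => x^2)
        (measurable_id.pow_const 2).aestronglyMeasurable (hmeas j).aemeasurable).mp ?_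
      rw [hmap j]
      exact MinPenAux.integrable_sq_gaussian
    have hSNint : Integrable (fun ω => ε^2 * S N ω) P := by
      have h : Integrable (S N) P := integrable_finset_sum _ fun j _ => hη2int j
      exact h.const_mul _
    have hgaes : AEStronglyMeasurable g P := ⟨g', hg'meas.stronglyMeasurable, haeeq⟩
    have hSnn : ∀ D (ω : Ω), 0 ≤ S D ω := fun D ω => Finset.sum_nonneg fun j _ => sq_nonneg _
    have hSmono : ∀ ω, S (Dhat ω) ω ≤ S N ω := fun ω =>
      Finset.sum_le_sum_of_subset_of_nonneg
        (Finset.range_subset_range.mpr (Finset.mem_Icc.mp (hDhat ω).1).2) (fun j _ _ => sq_nonneg _)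
    have hgint : Integrable g P := by
      refine Integrable.mono' hSNint hgaes (ae_of_all _ fun ω => ?_)
      rw [Real.norm_eq_abs, abs_of_nonneg (mul_nonneg (sq_nonneg ε) (hSnn _ _))]
      exact mul_le_mul_of_nonneg_left (hSmono ω) (sq_nonneg ε)
    have hlowint : Integrable (fun ω => ε^2 * S N ω - lam * N * ε^2) P :=
      hSNint.sub (integrable_const _)
    have hptwise : ∀ ω, ε^2 * S N ω - lam * N * ε^2 ≤ g ω := by
      intro ω
      obtain ⟨hDmem, hmin⟩ := hDhat ω
      have hminN := hmin N (Finset.mem_Icc.mpr ⟨hN1, le_rfl⟩)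
      rw [hcrit, hcrit] at hminN
      have hpos : (0:ℝ) ≤ lam * (Dhat ω) * ε^2 := by positivity
      show ε^2 * S N ω - lam * N * ε^2 ≤ ε^2 * S (Dhat ω) ω
      linarith
    have hEη2 : ∀ j, ∫ ω, (η j ω)^2 ∂P = 1 := by
      intro j
      have hgm : AEStronglyMeasurable (fun x : ℝ => x^2) (Measure.map (η j) P) := by
        apply Measurable.aestronglyMeasurable
        fun_prop
      rw [← MinPenAux.integral_sq_gaussian, ← hmap j, integral_map (hmeas j).aemeasurable hgm]
    have hExp : ∫ ω, (ε^2 * S N ω - lam * N * ε^2) ∂P = (1 - lam) * N * ε^2 := by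
      rw [integral_sub hSNint (integrable_const _), integral_const]
      have h1 : ∫ ω, ε^2 * S N ω ∂P = ε^2 * ∫ ω, S N ω ∂P := integral_const_mul _ _
      have h2 : ∫ ω, S N ω ∂P = N := by
        have h3 : ∫ ω, S N ω ∂P = ∑ j ∈ Finset.range N, ∫ ω, (η j ω)^2 ∂P := by
          simp only [hS_def]
          exact integral_finset_sum _ fun j _ => hη2int j
        rw [h3, Finset.sum_congr rfl fun j _ => hEη2 j, Finset.sum_const, Finset.card_range,
          nsmul_eq_mul, mul_one]
      rw [h1, h2]
      simp only [measure_univ, probReal_univ, ENNReal.toReal_one, smul_eq_mul, one_mul]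
      ring
    have hfinal : (1 - δ) * (1 - lam) / 4 * N * ε^2 ≤ (1 - lam) * N * ε^2 := by
      have hnn : (0:ℝ) ≤ (1 - lam) * N * ε^2 :=
        mul_nonneg (mul_nonneg h1lamN.le hN0.le) hε2.le
      have hd3 : (0:ℝ) ≤ 3 + δ := by linarith
      have key : (1 - lam) * N * ε^2 - (1 - δ) * (1 - lam) / 4 * N * ε^2
          = ((1 - lam) * N * ε^2) * ((3 + δ) / 4) := by ring
      have h4 := mul_nonneg hnn (by linarith : (0:ℝ) ≤ (3 + δ) / 4)
      linarith [key, h4]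
    calc (1 - δ) * (1 - lam) / 4 * N * ε^2 ≤ (1 - lam) * N * ε^2 := hfinal
      _ = ∫ ω, (ε^2 * S N ω - lam * N * ε^2) ∂P := hExp.symm
      _ ≤ ∫ ω, g ω ∂P := integral_mono hlowint hgint hptwise

end
end

section
/- Define V(h,h') = ⟨f̂_h − f_h, f_{h'} − f⟩. For any fixed h, h' > 0 and any x > 0, with probability larger than 1 − 2e^{−x}: |V(h,h')| ≤ √( (2x/n) ‖f‖_∞ ‖K‖_1² ‖f_{h'} − f‖² ) + x ‖f‖_∞ ‖K‖_1 (1+‖K‖_1) / (3n). -/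
open MeasureTheory ProbabilityTheory Real Finset
open scoped ENNReal NNReal

noncomputable section

/-- Scaled kernel `K_h(x) = (1/h) K(x/h)`. -/
def Kh (K : ℝ → ℝ) (h x : ℝ) : ℝ := (1 / h) * K (x / h)

/-- Squared L²(ℝ) norm. -/
def L2sq (g : ℝ → ℝ) : ℝ := ∫ x, (g x) ^ 2

/-- L²(ℝ) norm. -/
def L2n (g : ℝ → ℝ) : ℝ := Real.sqrt (L2sq g)

/-- L²(ℝ) inner product. -/
def ip2 (g k : ℝ → ℝ) : ℝ := ∫ x, g x * k x

/-- L¹(ℝ) norm. -/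
def L1N (g : ℝ → ℝ) : ℝ := ∫ x, |g x|

/-- L^∞(ℝ) (essential sup) norm. -/
def supN (g : ℝ → ℝ) : ℝ := (eLpNorm g ⊤ volume).toReal

/-- Kernel density estimator built from the sample `Y`. -/
def fhat (K : ℝ → ℝ) (h : ℝ) (n : ℕ) (Y : Fin n → ℝ) (x : ℝ) : ℝ :=
  (1 / (n : ℝ)) * ∑ i, Kh K h (x - Y i)

/-- `f_h = K_h ⋆ f`, the expectation of the kernel estimator. -/
def fbar (K f : ℝ → ℝ) (h x : ℝ) : ℝ := ∫ y, Kh K h (x - y) * f y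

/-- The PCO penalty `pen_λ(h) = (λ‖K_h‖² − ‖K_{h_min} − K_h‖²)/n`. -/
def pen (K : ℝ → ℝ) (hmin lam : ℝ) (n : ℕ) (h : ℝ) : ℝ :=
  (lam * L2sq (Kh K h) - L2sq (fun x => Kh K hmin x - Kh K h x)) / n

/-- The PCO criterion `‖f̂_h − f̂_{h_min}‖² + pen_λ(h)`. -/
def crit (K : ℝ → ℝ) (hmin lam : ℝ) (n : ℕ) (Y : Fin n → ℝ) (h : ℝ) : ℝ :=
  L2sq (fun x => fhat K h n Y x - fhat K hmin n Y x) + pen K hmin lam n h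

/-- The centered variable `V(h,h') = ⟨f̂_h − f_h, f_{h'} − f⟩`. -/
def Vstat (K f : ℝ → ℝ) (n : ℕ) (Y : Fin n → ℝ) (h h' : ℝ) : ℝ :=
  ip2 (fun x => fhat K h n Y x - fbar K f h x) (fun x => fbar K f h' x - f x)

set_option maxHeartbeats 1000000

lemma nat_fact_ge (k : ℕ) : 2 * 3 ^ k ≤ (k+2).factorial := by
  induction k with
  | zero => simp [Nat.factorial]
  | succ k ih =>
    have h : (k+3).factorial = (k+3) * (k+2).factorial := rfl
    calc 2*3^(k+1) = 3*(2*3^k) := by ring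
    _ ≤ 3 * (k+2).factorial := Nat.mul_le_mul_left _ ih
    _ ≤ (k+3) * (k+2).factorial := Nat.mul_le_mul_right _ (by omega)
    _ = (k+3).factorial := h.symm

lemma mgf_bernstein {Ω : Type} [MeasurableSpace Ω] (P : Measure Ω) [IsProbabilityMeasure P]
    (Z : Ω → ℝ) (hZ : Measurable Z) (B σ2 m t : ℝ) (hB0 : 0 ≤ B)
    (hB : ∀ ω, |Z ω| ≤ B) (hm : ∫ ω, Z ω ∂P = m)
    (hsq : ∫ ω, (Z ω)^2 ∂P ≤ σ2)
    (ht : 0 ≤ t) (htB : t * B < 3) :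
    mgf (fun ω => Z ω - m) P t ≤ Real.exp (σ2 * t^2 / (2 * (1 - t*B/3))) := by
  have hσ2 : 0 ≤ σ2 := le_trans (integral_nonneg fun ω => sq_nonneg _) hsq
  have hIk : ∀ k : ℕ, Integrable (fun ω => (Z ω)^k) P := by
    intro k
    refine (integrable_const (B^k)).mono' ((hZ.pow_const k).aestronglyMeasurable) ?_
    refine Filter.Eventually.of_forall fun ω => ?_
    calc ‖Z ω ^ k‖ = |Z ω|^k := by rw [Real.norm_eq_abs, abs_pow]
    _ ≤ B^k := pow_le_pow_left₀ (abs_nonneg _) (hB ω) k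
  set I : ℕ → ℝ := fun k => ∫ ω, (Z ω)^k ∂P with hI
  have hI0 : I 0 = 1 := by simp [hI]
  have hI1 : I 1 = m := by simpa [hI] using hm
  have hIb : ∀ k, |I k| ≤ B ^ k := by
    intro k
    show |∫ ω, (Z ω)^k ∂P| ≤ B ^ k
    rw [← Real.norm_eq_abs]
    refine (norm_integral_le_integral_norm _).trans ?_
    calc ∫ ω, ‖Z ω ^ k‖ ∂P ≤ ∫ _ω, B^k ∂P := by
          refine integral_mono (hIk k).norm (integrable_const _) fun ω => ?_
          calc ‖Z ω ^ k‖ = |Z ω|^k := by rw [Real.norm_eq_abs, abs_pow]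
          _ ≤ B^k := pow_le_pow_left₀ (abs_nonneg _) (hB ω) k
    _ = B ^ k := by simp
  have hI2 : ∀ k, |I (k+2)| ≤ σ2 * B ^ k := by
    intro k
    show |∫ ω, (Z ω)^(k+2) ∂P| ≤ σ2 * B ^ k
    rw [← Real.norm_eq_abs]
    refine (norm_integral_le_integral_norm _).trans ?_
    calc ∫ ω, ‖Z ω ^ (k+2)‖ ∂P ≤ ∫ ω, (Z ω)^2 * B^k ∂P := by
          refine integral_mono (hIk (k+2)).norm ((hIk 2).mul_const _) fun ω => ?_
          calc ‖Z ω ^ (k+2)‖ = |Z ω|^2 * |Z ω|^k := by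
                rw [Real.norm_eq_abs, abs_pow, pow_add, mul_comm]
          _ ≤ |Z ω|^2 * B^k := by
                refine mul_le_mul_of_nonneg_left (pow_le_pow_left₀ (abs_nonneg _) (hB ω) k) (by positivity)
          _ = (Z ω)^2 * B^k := by rw [sq_abs]
    _ = I 2 * B^k := by rw [integral_mul_const]
    _ ≤ σ2 * B^k := mul_le_mul_of_nonneg_right hsq (by positivity)
  have hexp : ∀ y : ℝ, Real.exp y = ∑' k : ℕ, y^k / k.factorial := by
    intro y
    rw [Real.exp_eq_exp_ℝ, NormedSpace.exp_eq_tsum_div]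
  have habs : ∀ (k : ℕ) (ω : Ω), |(t * Z ω)^k / k.factorial| ≤ (t*B)^k / k.factorial := by
    intro k ω
    rw [abs_div, abs_pow, abs_of_nonneg (by positivity : (0:ℝ) ≤ (k.factorial:ℝ))]
    gcongr
    calc |t * Z ω| = t * |Z ω| := by rw [abs_mul, abs_of_nonneg ht]
    _ ≤ t * B := mul_le_mul_of_nonneg_left (hB ω) ht
  have hswap : ∫ ω, Real.exp (t * Z ω) ∂P = ∑' k : ℕ, ∫ ω, (t*Z ω)^k / k.factorial ∂P := by
    simp_rw [hexp]
    refine integral_tsum (fun k => (((hZ.const_mul t).pow_const k).div_const _).aestronglyMeasurable) ?_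
    have hb : ∀ k : ℕ, ∫⁻ ω, ‖(t*Z ω)^k / (k.factorial : ℝ)‖₊ ∂P ≤ ENNReal.ofReal ((t*B)^k / k.factorial) := by
      intro k
      calc ∫⁻ ω, ‖(t*Z ω)^k / (k.factorial : ℝ)‖₊ ∂P
          ≤ ∫⁻ _ω, ENNReal.ofReal ((t*B)^k / k.factorial) ∂P := by
            refine lintegral_mono fun ω => ?_
            rw [← ENNReal.ofReal_coe_nnreal, coe_nnnorm]
            exact ENNReal.ofReal_le_ofReal ((Real.norm_eq_abs _).symm ▸ habs k ω)
      _ = ENNReal.ofReal ((t*B)^k / k.factorial) := by simp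
    refine ne_top_of_le_ne_top ?_ (ENNReal.tsum_le_tsum hb)
    rw [← ENNReal.ofReal_tsum_of_nonneg (fun k => by positivity) (Real.summable_pow_div_factorial _)]
    exact ENNReal.ofReal_ne_top
  have hterm : ∀ k : ℕ, ∫ ω, (t*Z ω)^k / k.factorial ∂P = t^k * I k / k.factorial := by
    intro k
    have hh : (fun ω => (t*Z ω)^k / (k.factorial : ℝ)) = fun ω => (t^k / k.factorial) * (Z ω)^k := by
      funext ω; rw [mul_pow]; ring
    rw [hh, integral_const_mul]
    show t ^ k / k.factorial * I k = _
    ring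
  set F : ℕ → ℝ := fun k => t^k * I k / k.factorial with hF
  have hFb : ∀ k, ‖F k‖ ≤ (t*B)^k / k.factorial := by
    intro k
    rw [hF, Real.norm_eq_abs, abs_div, abs_of_nonneg (by positivity : (0:ℝ) ≤ ((k.factorial : ℕ):ℝ)), abs_mul,
      abs_of_nonneg (by positivity : (0:ℝ) ≤ t^k), mul_pow]
    gcongr
    exact hIb k
  have hFs : Summable F := Summable.of_norm_bounded (Real.summable_pow_div_factorial _) hFb
  have hsplit : ∫ ω, Real.exp (t * Z ω) ∂P = (1 + t*m) + ∑' k, F (k+2) := by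
    rw [hswap, tsum_congr hterm, ← Summable.sum_add_tsum_nat_add 2 hFs]
    congr 1
    rw [Finset.sum_range_succ, Finset.sum_range_one]
    simp [hF, hI0, hI1]
  have hr0 : 0 ≤ t*B/3 := by positivity
  have hr1 : t*B/3 < 1 := by linarith
  have hb2 : ∀ k, ‖F (k+2)‖ ≤ (σ2 * t^2/2) * (t*B/3)^k := by
    intro k
    rw [hF, Real.norm_eq_abs, abs_div, abs_of_nonneg (by positivity : (0:ℝ) ≤ (((k+2).factorial : ℕ):ℝ)),
      abs_mul, abs_of_nonneg (by positivity : (0:ℝ) ≤ t^(k+2))]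
    calc t^(k+2) * |I (k+2)| / (k+2).factorial ≤ t^(k+2) * (σ2 * B^k) / (k+2).factorial := by
          gcongr
          exact hI2 k
    _ ≤ t^(k+2) * (σ2 * B^k) / (2 * 3^k) := by
          have h23 : (2:ℝ) * 3^k ≤ ((k+2).factorial : ℝ) := by exact_mod_cast nat_fact_ge k
          exact div_le_div_of_nonneg_left (by positivity) (by positivity) h23
    _ = (σ2 * t^2/2) * (t*B/3)^k := by rw [div_pow, mul_pow]; ring
  have hgs : Summable (fun k : ℕ => (σ2 * t^2/2) * (t*B/3)^k) :=
    (summable_geometric_of_lt_one hr0 hr1).mul_left _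
  have hns : Summable (fun k => ‖F (k+2)‖) :=
    Summable.of_nonneg_of_le (fun k => norm_nonneg _) hb2 hgs
  have htail : ∑' k, F (k+2) ≤ σ2 * t^2/2 * (1 - t*B/3)⁻¹ := by
    calc ∑' k, F (k+2) ≤ |∑' k, F (k+2)| := le_abs_self _
    _ = ‖∑' k, F (k+2)‖ := (Real.norm_eq_abs _).symm
    _ ≤ ∑' k, ‖F (k+2)‖ := norm_tsum_le_tsum_norm hns
    _ ≤ ∑' k, (σ2 * t^2/2) * (t*B/3)^k := Summable.tsum_le_tsum hb2 hns hgs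
    _ = (σ2 * t^2/2) * (1 - t*B/3)⁻¹ := by rw [tsum_mul_left, tsum_geometric_of_lt_one hr0 hr1]
  set D := σ2 * t^2 / (2 * (1 - t*B/3)) with hD
  have hDeq : σ2 * t^2/2 * (1 - t*B/3)⁻¹ = D := by
    rw [hD, ← div_eq_mul_inv, div_div]
  have hint : ∫ ω, Real.exp (t*Z ω) ∂P ≤ Real.exp (t*m + D) := by
    have h1 : ∫ ω, Real.exp (t*Z ω) ∂P ≤ 1 + t*m + D := by
      rw [hsplit]
      have h2 := htail
      rw [hDeq] at h2
      linarith
    refine h1.trans ?_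
    have h3 := Real.add_one_le_exp (t*m + D)
    linarith
  have hpt : (fun ω => Real.exp (t * (Z ω - m))) = fun ω => Real.exp (t * Z ω) * Real.exp (-(t*m)) := by
    funext ω
    rw [← Real.exp_add]
    congr 1
    ring
  have hmgf : mgf (fun ω => Z ω - m) P t = (∫ ω, Real.exp (t*Z ω) ∂P) * Real.exp (-(t*m)) := by
    have : mgf (fun ω => Z ω - m) P t = ∫ ω, Real.exp (t * (Z ω - m)) ∂P := rfl
    rw [this, hpt, integral_mul_const]
  rw [hmgf]
  calc (∫ ω, Real.exp (t*Z ω) ∂P) * Real.exp (-(t*m))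
      ≤ Real.exp (t*m + D) * Real.exp (-(t*m)) :=
        mul_le_mul_of_nonneg_right hint (Real.exp_pos _).le
  _ = Real.exp D := by rw [← Real.exp_add]; congr 1; ring

lemma bernstein_one_side {Ω : Type} [MeasurableSpace Ω] (P : Measure Ω) [IsProbabilityMeasure P]
    (n : ℕ) (hn : 0 < n) (W : Fin n → Ω → ℝ) (hWm : ∀ i, Measurable (W i))
    (hindep : iIndepFun W P)
    (B σ2 m : ℝ) (hBpos : 0 < B) (hσ2 : 0 < σ2)
    (hB : ∀ i ω, |W i ω| ≤ B) (hm : ∀ i, ∫ ω, W i ω ∂P = m)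
    (hsq : ∀ i, ∫ ω, (W i ω)^2 ∂P ≤ σ2)
    (x : ℝ) (hx : 0 < x) :
    P {ω | Real.sqrt (2 * σ2 * x * n) + B * x / 3 ≤ ∑ i, (W i ω - m)}
      ≤ ENNReal.ofReal (Real.exp (-x)) := by
  have hnR : (0:ℝ) < n := by exact_mod_cast hn
  set v : ℝ := n * σ2 with hv
  have hvpos : 0 < v := by positivity
  set c : ℝ := B / 3 with hc
  have hcpos : 0 < c := by positivity
  set a : ℝ := Real.sqrt (2 * x / v) with ha
  have hapos : 0 < a := Real.sqrt_pos.mpr (by positivity)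
  have ha2 : a^2 = 2*x/v := Real.sq_sqrt (by positivity)
  have hva2 : v * a^2 = 2*x := by rw [ha2]; field_simp
  set t : ℝ := a / (1 + c*a) with htdef
  have hden : 0 < 1 + c*a := by positivity
  have hq : (1 + c*a) ≠ 0 := ne_of_gt hden
  have htpos : 0 < t := by positivity
  have hct : 1 - c*t = 1/(1+c*a) := by rw [htdef]; field_simp; ring
  have htB : t * B < 3 := by
    have h1 : c*t < 1 := by
      have h2 : c*t = c*a/(1+c*a) := by rw [htdef]; ring
      rw [h2, div_lt_one hden]; linarith
    calc t*B = 3*(c*t) := by rw [hc]; ring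
    _ < 3 := by linarith
  set u : ℝ := Real.sqrt (2 * σ2 * x * n) + B * x / 3 with hu
  have husq : Real.sqrt (2 * σ2 * x * n) = a * v := by
    have h1 : 2*σ2*x*(n:ℝ) = (2*x/v) * v^2 := by field_simp [hv]; ring
    rw [h1, Real.sqrt_mul (by positivity), Real.sqrt_sq hvpos.le, ha]
  have hueq : u = a*v + c*x := by rw [hu, husq, hc]; ring
  set Y : Fin n → Ω → ℝ := fun i ω => W i ω - m with hY
  have hYm : ∀ i, Measurable (Y i) := fun i => (hWm i).sub measurable_const
  have hYindep : iIndepFun Y P :=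
    hindep.comp (fun _ => fun y => y - m) (fun _ => measurable_id.sub measurable_const)
  set D : ℝ := σ2 * t^2 / (2*(1 - t*B/3)) with hD
  have hmgfi : ∀ i, mgf (Y i) P t ≤ Real.exp D := fun i =>
    mgf_bernstein P (W i) (hWm i) B σ2 m t hBpos.le (hB i) (hm i) (hsq i) htpos.le htB
  set S : Ω → ℝ := fun ω => ∑ i, Y i ω with hS
  have hfeq : S = (∑ i, Y i) := by funext ω; simp [hS]
  have hsum : mgf S P t = ∏ i, mgf (Y i) P t := by
    rw [hfeq]; exact hYindep.mgf_sum hYm Finset.univ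
  have hprod : ∏ i, mgf (Y i) P t ≤ Real.exp (n * D) := by
    calc ∏ i, mgf (Y i) P t ≤ ∏ _i : Fin n, Real.exp D :=
          Finset.prod_le_prod (fun i _ => mgf_nonneg) (fun i _ => hmgfi i)
    _ = Real.exp (n * D) := by
          rw [Finset.prod_const, ← Real.exp_nat_mul]; simp
  have hSm : Measurable S := by
    apply Finset.measurable_sum
    exact fun i _ => hYm i
  have hint : Integrable (fun ω => Real.exp (t * S ω)) P := by
    refine (integrable_const (Real.exp (t * (n * (B + |m|))))).mono'
      ((hSm.const_mul t).exp.aestronglyMeasurable) ?_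
    refine Filter.Eventually.of_forall fun ω => ?_
    rw [Real.norm_eq_abs, abs_of_nonneg (Real.exp_pos _).le, Real.exp_le_exp]
    have hSb : S ω ≤ n * (B + |m|) := by
      rw [hS]
      calc ∑ i, Y i ω ≤ ∑ _i : Fin n, (B + |m|) := by
            refine Finset.sum_le_sum fun i _ => ?_
            have h1 := hB i ω
            have h2 := abs_nonneg m
            have h3 := abs_le.mp (le_refl |m|)
            rw [hY]
            have := neg_abs_le m
            simp only
            cases' abs_le.mp h1 with h4 h5
            linarith
      _ = n * (B + |m|) := by
            rw [Finset.sum_const, Finset.card_univ, Fintype.card_fin, nsmul_eq_mul]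
    exact mul_le_mul_of_nonneg_left hSb htpos.le
  have hchern := measure_ge_le_exp_mul_mgf (μ := P) (X := S) u htpos.le hint
  have hkey : -t*u + n*D = -x := by
    have hbc : t*B/3 = c*t := by rw [hc]; ring
    have hnd : (n:ℝ)*σ2 = v := hv.symm
    rw [hueq, hD, hbc, hct]
    rw [htdef]
    have hva2' : (↑n*σ2) * a^2 = 2*x := by rw [hv] at hva2; exact hva2
    field_simp
    linear_combination (-1:ℝ) * hva2'
  have htoReal : (P {ω | u ≤ S ω}).toReal ≤ Real.exp (-x) := by
    calc (P {ω | u ≤ S ω}).toReal ≤ Real.exp (-t*u) * mgf S P t := hchern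
    _ ≤ Real.exp (-t*u) * Real.exp (n*D) := by
          refine mul_le_mul_of_nonneg_left ?_ (Real.exp_pos _).le
          rw [hsum]; exact hprod
    _ = Real.exp (-t*u + n*D) := (Real.exp_add _ _).symm
    _ = Real.exp (-x) := by rw [hkey]
  calc P {ω | u ≤ ∑ i, (W i ω - m)} = ENNReal.ofReal ((P {ω | u ≤ S ω}).toReal) := by
        rw [ENNReal.ofReal_toReal (measure_ne_top P _)]
  _ ≤ ENNReal.ofReal (Real.exp (-x)) := ENNReal.ofReal_le_ofReal htoReal

lemma integral_CS {α : Type*} [MeasurableSpace α] (μ : Measure α) (u v : α → ℝ)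
    (hu0 : ∀ x, 0 ≤ u x) (hv0 : ∀ x, 0 ≤ v x)
    (hu2 : Integrable (fun x => u x^2) μ) (hv2 : Integrable (fun x => v x^2) μ)
    (huv : Integrable (fun x => u x * v x) μ) :
    (∫ x, u x * v x ∂μ)^2 ≤ (∫ x, u x^2 ∂μ) * (∫ x, v x^2 ∂μ) := by
  have key : ∀ lam : ℝ, 0 ≤ (∫ x, v x^2 ∂μ) * (lam * lam) + (-(2 * ∫ x, u x * v x ∂μ)) * lam
      + ∫ x, u x^2 ∂μ := by
    intro lam
    have heq : ∫ x, (lam * v x - u x)^2 ∂μ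
        = (∫ x, v x^2 ∂μ) * (lam*lam) + (-(2 * ∫ x, u x * v x ∂μ)) * lam + ∫ x, u x^2 ∂μ := by
      have h1 : (fun x => (lam * v x - u x)^2)
          = fun x => (lam*lam) * (v x^2) - (2*lam) * (u x * v x) + u x^2 := by
        funext x; ring
      have hf1 : Integrable (fun x => (lam*lam) * (v x^2) - (2*lam) * (u x * v x)) μ :=
        (hv2.const_mul _).sub (huv.const_mul _)
      have hf2 : Integrable (fun x => (lam*lam) * (v x^2)) μ := hv2.const_mul _
      have hf3 : Integrable (fun x => (2*lam) * (u x * v x)) μ := huv.const_mul _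
      rw [h1, integral_add hf1 hu2, integral_sub hf2 hf3, integral_const_mul, integral_const_mul]
      ring
    rw [← heq]
    exact integral_nonneg fun x => sq_nonneg _
  have h := discrim_le_zero key
  rw [discrim] at h
  nlinarith [h]

theorem V_term_Bernstein_bound
    {Ω : Type} [MeasurableSpace Ω] (P : Measure Ω) [IsProbabilityMeasure P]
    (n : ℕ) (hn : 0 < n)
    (X : Fin n → Ω → ℝ) (hXm : ∀ i, Measurable (X i))
    (f : ℝ → ℝ) (hfm : Measurable f) (hf0 : ∀ x, 0 ≤ f x)
    (hfb : eLpNorm f ⊤ volume < ⊤)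
    (hXd : ∀ i, Measure.map (X i) P = volume.withDensity fun x => ENNReal.ofReal (f x))
    (hindep : iIndepFun X P)
    (K : ℝ → ℝ) (hKm : Measurable K) (hKi : Integrable K)
    (hKb : eLpNorm K ⊤ volume < ⊤)
    (hKsym : ∀ x, K (-x) = K x) (hK1 : (∫ x, K x) = 1)
    (h h' : ℝ) (hh : 0 < h) (hh' : 0 < h')
    (x : ℝ) (hx : 0 < x) :
    P {ω | |Vstat K f n (fun i => X i ω) h h'| ≤
        Real.sqrt ((2 * x / n) * supN f * (L1N K) ^ 2
            * L2sq (fun t => fbar K f h' t - f t))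
          + x * supN f * L1N K * (1 + L1N K) / (3 * n)}
      ≥ 1 - ENNReal.ofReal (2 * Real.exp (-x)) := by
  classical
  have hnR : (0:ℝ) < n := by exact_mod_cast hn
  -- f is a probability density
  have hmap : IsProbabilityMeasure (Measure.map (X ⟨0, hn⟩) P) :=
    Measure.isProbabilityMeasure_map (hXm _).aemeasurable
  have hwd : (volume.withDensity fun y => ENNReal.ofReal (f y)) Set.univ = 1 := by
    rw [← hXd ⟨0,hn⟩]; exact hmap.measure_univ
  have hlint : ∫⁻ y, ENNReal.ofReal (f y) = 1 := by
    rw [← hwd, withDensity_apply _ MeasurableSet.univ, Measure.restrict_univ]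
  have hfint : Integrable f := by
    have h1 : Integrable (fun y => (ENNReal.ofReal (f y)).toReal) volume :=
      integrable_toReal_of_lintegral_ne_top (hfm.ennreal_ofReal.aemeasurable)
        (by rw [hlint]; exact ENNReal.one_ne_top)
    refine h1.congr (Filter.Eventually.of_forall fun y => ?_)
    simp [ENNReal.toReal_ofReal (hf0 y)]
  have hfI : ∫ y, f y = 1 := by
    rw [integral_eq_lintegral_of_nonneg_ae (Filter.Eventually.of_forall hf0)
      hfm.aestronglyMeasurable, hlint]
    simp
  set M := supN f with hM
  have hM0 : 0 ≤ M := ENNReal.toReal_nonneg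
  have hMae : ∀ᵐ y, |f y| ≤ M := by
    filter_upwards [ae_le_eLpNormEssSup (f := f) (μ := volume)] with y hy
    have h2 : ((‖f y‖₊ : ℝ≥0∞)).toReal ≤ (eLpNormEssSup f volume).toReal :=
      ENNReal.toReal_mono (by rw [← eLpNorm_exponent_top]; exact hfb.ne) hy
    calc |f y| = ((‖f y‖₊ : ℝ≥0∞)).toReal := by simp [Real.norm_eq_abs]
    _ ≤ M := by rw [hM]; unfold supN; rw [eLpNorm_exponent_top]; exact h2
  have hMpos : 0 < M := by
    rcases hM0.lt_or_eq with h1 | h1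
    · exact h1
    · exfalso
      have hf0' : f =ᵐ[volume] 0 := by
        filter_upwards [hMae] with y hy
        have := abs_nonneg (f y)
        have : |f y| = 0 := le_antisymm (by rw [← h1] at hy; exact hy) this
        simpa [abs_eq_zero] using this
      rw [integral_congr_ae hf0'] at hfI
      simp at hfI
  -- kernel facts
  have hKnorm : 0 ≤ L1N K := integral_nonneg fun s => abs_nonneg _
  have hK1' : 1 ≤ L1N K := by
    calc (1:ℝ) = |∫ s, K s| := by rw [hK1]; norm_num
    _ ≤ ∫ s, |K s| := by
        rw [← Real.norm_eq_abs (∫ s, K s)]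
        exact (norm_integral_le_integral_norm _).trans (le_of_eq (by simp [Real.norm_eq_abs]))
    _ = L1N K := rfl
  have hKhm : ∀ b : ℝ, Measurable (Kh K b) := fun b =>
    (hKm.comp (measurable_id.div_const b)).const_mul _
  have hKhi : ∀ b : ℝ, 0 < b → Integrable (Kh K b) := fun b hb =>
    (hKi.comp_div (ne_of_gt hb)).const_mul _
  have hKhL1 : ∀ b : ℝ, 0 < b → ∫ s, |Kh K b s| = L1N K := by
    intro b hb
    have h1 : (fun s => |Kh K b s|) = fun s => |1/b| * |K (s/b)| := by
      funext s; rw [Kh, abs_mul]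
    rw [h1, integral_const_mul, MeasureTheory.Measure.integral_comp_div (fun z => |K z|) b]
    rw [abs_of_pos (by positivity : (0:ℝ) < 1/b), smul_eq_mul, abs_of_pos hb]
    field_simp [L1N]
    rfl
  -- shifted kernel L1 integrals
  have hKh_shift_r : ∀ (b : ℝ), 0 < b → ∀ y : ℝ, (∫ s, |Kh K b (s - y)|) = L1N K := by
    intro b hb y
    rw [integral_sub_right_eq_self (fun s => |Kh K b s|) y]
    exact hKhL1 b hb
  have hKh_shift_l : ∀ (b : ℝ), 0 < b → ∀ t : ℝ, (∫ y, |Kh K b (t - y)|) = L1N K := by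
    intro b hb t
    rw [integral_sub_left_eq_self (fun s => |Kh K b s|) volume t]
    exact hKhL1 b hb
  -- fbar facts
  have hfbarm : ∀ b : ℝ, Measurable (fbar K f b) := by
    intro b
    have hsm : StronglyMeasurable (fun p : ℝ × ℝ => Kh K b (p.1 - p.2) * f p.2) :=
      (((hKhm b).comp (measurable_fst.sub measurable_snd)).mul
        (hfm.comp measurable_snd)).stronglyMeasurable
    exact hsm.integral_prod_right'.measurable
  have hfbar_int_pt : ∀ (b : ℝ), 0 < b → ∀ t : ℝ, Integrable (fun y => Kh K b (t - y) * f y) := by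
    intro b hb t
    have h1 : Integrable (fun y => f y * Kh K b (t - y)) :=
      Integrable.bdd_mul ((hKhi b hb).comp_sub_left t) hfm.aestronglyMeasurable
        (by filter_upwards [hMae] with y hy; rwa [Real.norm_eq_abs])
    exact h1.congr (Filter.Eventually.of_forall fun y => mul_comm _ _)
  have hfbar_bd : ∀ (b : ℝ), 0 < b → ∀ t : ℝ, |fbar K f b t| ≤ L1N K * M := by
    intro b hb t
    rw [fbar, ← Real.norm_eq_abs]
    refine (norm_integral_le_integral_norm _).trans ?_
    have hle : (∫ y, ‖Kh K b (t - y) * f y‖) ≤ ∫ y, |Kh K b (t - y)| * M := by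
      refine integral_mono_ae (hfbar_int_pt b hb t).norm
        (((hKhi b hb).comp_sub_left t).abs.mul_const M) ?_
      filter_upwards [hMae] with y hy
      rw [Real.norm_eq_abs, abs_mul]
      exact mul_le_mul_of_nonneg_left hy (abs_nonneg _)
    refine hle.trans (le_of_eq ?_)
    rw [integral_mul_const, hKh_shift_l b hb t]
  have hfbprod : Integrable (fun p : ℝ × ℝ => Kh K h' (p.1 - p.2) * f p.2)
      (volume.prod volume) := by
    have hmeas : AEStronglyMeasurable (fun p : ℝ × ℝ => Kh K h' (p.1 - p.2) * f p.2)
        (volume.prod volume) :=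
      (((hKhm h').comp (measurable_fst.sub measurable_snd)).mul
        (hfm.comp measurable_snd)).aestronglyMeasurable
    rw [integrable_prod_iff' hmeas]
    constructor
    · exact Filter.Eventually.of_forall fun y => by simpa using ((hKhi h' hh').comp_sub_right y).mul_const (f y)
    · have heq : (fun y => ∫ t, ‖Kh K h' (t - y) * f y‖) = fun y => L1N K * |f y| := by
        funext y
        simp_rw [norm_mul, Real.norm_eq_abs]
        rw [integral_mul_const, hKh_shift_r h' hh' y]
      rw [heq]
      exact hfint.abs.const_mul _
  have hfbint : Integrable (fbar K f h') := hfbprod.integral_prod_left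
  -- the bias function d
  set d : ℝ → ℝ := fun t => fbar K f h' t - f t with hd
  have hdm : Measurable d := (hfbarm h').sub hfm
  have hdint : Integrable d := hfbint.sub hfint
  set DD : ℝ := M * (1 + L1N K) with hDD
  have hDDpos : 0 < DD := mul_pos hMpos (by linarith)
  have hdae : ∀ᵐ t, |d t| ≤ DD := by
    filter_upwards [hMae] with t ht
    calc |d t| = |fbar K f h' t - f t| := by rw [hd]
    _ ≤ |fbar K f h' t| + |f t| := abs_sub _ _
    _ ≤ L1N K * M + M := add_le_add (hfbar_bd h' hh' t) ht
    _ = DD := by rw [hDD]; ring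
  have hd2int : Integrable (fun t => d t^2) := by
    have h1 : Integrable (fun t => d t * d t) :=
      Integrable.bdd_mul hdint hdm.aestronglyMeasurable
        (by filter_upwards [hdae] with t ht; rwa [Real.norm_eq_abs])
    exact h1.congr (Filter.Eventually.of_forall fun t => (pow_two (d t)).symm)
  -- the function g
  set g : ℝ → ℝ := fun y => ∫ t, Kh K h (t - y) * d t with hgdef
  have hgm : Measurable g := by
    have hsm : StronglyMeasurable (fun p : ℝ × ℝ => Kh K h (p.2 - p.1) * d p.2) :=
      (((hKhm h).comp (measurable_snd.sub measurable_fst)).mul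
        (hdm.comp measurable_snd)).stronglyMeasurable
    exact hsm.integral_prod_right'.measurable
  have hgint_pt : ∀ y : ℝ, Integrable (fun t => Kh K h (t - y) * d t) := by
    intro y
    have h1 : Integrable (fun t => d t * Kh K h (t - y)) :=
      Integrable.bdd_mul ((hKhi h hh).comp_sub_right y) hdm.aestronglyMeasurable
        (by filter_upwards [hdae] with t ht; rwa [Real.norm_eq_abs])
    exact h1.congr (Filter.Eventually.of_forall fun t => mul_comm _ _)
  set B : ℝ := M * L1N K * (1 + L1N K) with hB
  have hKpos : (0:ℝ) < L1N K := lt_of_lt_of_le one_pos hK1'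
  have hBpos : 0 < B := mul_pos (mul_pos hMpos hKpos) (by linarith)
  have hBD : L1N K * DD = B := by rw [hDD, hB]; ring
  have hgbd : ∀ y, |g y| ≤ B := by
    intro y
    have hgy : g y = ∫ t, Kh K h (t - y) * d t := by rw [hgdef]
    rw [hgy, ← Real.norm_eq_abs]
    refine (norm_integral_le_integral_norm _).trans ?_
    have hle : (∫ t, ‖Kh K h (t - y) * d t‖) ≤ ∫ t, |Kh K h (t - y)| * DD := by
      refine integral_mono_ae (hgint_pt y).norm
        (((hKhi h hh).comp_sub_right y).abs.mul_const DD) ?_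
      filter_upwards [hdae] with t ht
      rw [Real.norm_eq_abs, abs_mul]
      exact mul_le_mul_of_nonneg_left ht (abs_nonneg _)
    refine hle.trans (le_of_eq ?_)
    rw [integral_mul_const, hKh_shift_r h hh y, hBD]
  -- integrability of |Kh(.-y)| * |d|
  have habs_int : ∀ y : ℝ, Integrable (fun t => |Kh K h (t - y)| * |d t|) := by
    intro y
    have h2 : Integrable (fun t => |d t| * |Kh K h (t - y)|) :=
      Integrable.bdd_mul ((hKhi h hh).abs.comp_sub_right y) hdm.abs.aestronglyMeasurable
        (by filter_upwards [hdae] with t ht; rwa [Real.norm_eq_abs, abs_abs])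
    exact h2.congr (Filter.Eventually.of_forall fun t => mul_comm _ _)
  have hconv_bd : ∀ y : ℝ, (∫ t, |Kh K h (t - y)| * |d t|) ≤ L1N K * DD := by
    intro y
    have hle : (∫ t, |Kh K h (t - y)| * |d t|) ≤ ∫ t, |Kh K h (t - y)| * DD := by
      refine integral_mono_ae (habs_int y) (((hKhi h hh).abs.comp_sub_right y).mul_const DD) ?_
      filter_upwards [hdae] with t ht
      exact mul_le_mul_of_nonneg_left ht (abs_nonneg _)
    refine hle.trans (le_of_eq ?_)
    rw [integral_mul_const, hKh_shift_r h hh y]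
  -- J and the L2 bound on g
  set J : ℝ → ℝ := fun y => ∫ t, |Kh K h (t - y)| * d t^2 with hJdef
  have hGmeas : AEStronglyMeasurable (fun p : ℝ × ℝ => |Kh K h (p.2 - p.1)| * d p.2^2)
      (volume.prod volume) :=
    ((((hKhm h).comp (measurable_snd.sub measurable_fst)).abs).mul
      ((hdm.comp measurable_snd).pow_const 2)).aestronglyMeasurable
  have hKd2_int : ∀ t : ℝ, Integrable (fun s => |Kh K h (t - s)| * d t^2) :=
    fun t => ((hKhi h hh).abs.comp_sub_left t).mul_const _
  have hd2Kh_int : ∀ y : ℝ, Integrable (fun t => |Kh K h (t - y)| * d t^2) := by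
    intro y
    have h2 : Integrable (fun t => d t^2 * |Kh K h (t - y)|) :=
      Integrable.bdd_mul ((hKhi h hh).abs.comp_sub_right y)
        ((hdm.pow_const 2).aestronglyMeasurable)
        (by filter_upwards [hdae] with t ht
            rw [Real.norm_eq_abs, abs_of_nonneg (sq_nonneg _)]
            calc d t^2 = |d t|^2 := (sq_abs _).symm
            _ ≤ DD^2 := pow_le_pow_left₀ (abs_nonneg _) ht 2)
    exact h2.congr (Filter.Eventually.of_forall fun t => mul_comm _ _)
  have hGprod : Integrable (fun p : ℝ × ℝ => |Kh K h (p.2 - p.1)| * d p.2^2)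
      (volume.prod volume) := by
    rw [integrable_prod_iff' hGmeas]
    constructor
    · exact Filter.Eventually.of_forall fun t => by simpa using hKd2_int t
    · refine Integrable.congr (hd2int.const_mul (L1N K))
        (Filter.Eventually.of_forall fun t => ?_)
      show L1N K * d t^2 = ∫ y, ‖|Kh K h (t - y)| * d t^2‖
      rw [show (fun y => ‖|Kh K h (t-y)| * d t^2‖) = fun y => |Kh K h (t-y)| * d t^2 from
        funext fun y => by rw [Real.norm_eq_abs, abs_of_nonneg (by positivity)]]
      rw [integral_mul_const, hKh_shift_l h hh t]
  have hJint : Integrable J := hGprod.integral_prod_left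
  have hJswap : (∫ y, J y) = L1N K * ∫ t, d t^2 := by
    have h1 : (∫ y, ∫ t, |Kh K h (t - y)| * d t^2) = ∫ t, ∫ y, |Kh K h (t - y)| * d t^2 :=
      integral_integral_swap (f := fun y t => |Kh K h (t - y)| * d t^2) hGprod
    calc (∫ y, J y) = ∫ y, ∫ t, |Kh K h (t - y)| * d t^2 := by rw [hJdef]
    _ = ∫ t, ∫ y, |Kh K h (t - y)| * d t^2 := h1
    _ = ∫ t, L1N K * d t^2 := by
        refine integral_congr_ae (Filter.Eventually.of_forall fun t => ?_)
        show (∫ y, |Kh K h (t - y)| * d t^2) = L1N K * d t^2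
        rw [integral_mul_const, hKh_shift_l h hh t]
    _ = L1N K * ∫ t, d t^2 := integral_const_mul _ _
  have hg2bd_pt : ∀ y, g y^2 ≤ L1N K * J y := by
    intro y
    have h1 : |g y| ≤ ∫ t, |Kh K h (t - y)| * |d t| := by
      calc |g y| = ‖∫ t, Kh K h (t - y) * d t‖ := by rw [hgdef, Real.norm_eq_abs]
      _ ≤ ∫ t, ‖Kh K h (t - y) * d t‖ := norm_integral_le_integral_norm _
      _ = ∫ t, |Kh K h (t - y)| * |d t| := by simp_rw [norm_mul, Real.norm_eq_abs]
    have hus : ∀ t : ℝ, Real.sqrt (|Kh K h (t - y)|) * (Real.sqrt (|Kh K h (t - y)|) * |d t|)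
        = |Kh K h (t - y)| * |d t| := fun t => by
      rw [← mul_assoc, Real.mul_self_sqrt (abs_nonneg _)]
    have hu2 : ∀ t : ℝ, (Real.sqrt (|Kh K h (t - y)|))^2 = |Kh K h (t - y)| :=
      fun t => Real.sq_sqrt (abs_nonneg _)
    have hv2 : ∀ t : ℝ, (Real.sqrt (|Kh K h (t - y)|) * |d t|)^2 = |Kh K h (t - y)| * d t^2 :=
      fun t => by rw [mul_pow, Real.sq_sqrt (abs_nonneg _), sq_abs]
    have hu2i : Integrable (fun t => (Real.sqrt (|Kh K h (t - y)|))^2) :=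
      ((hKhi h hh).abs.comp_sub_right y).congr
        (Filter.Eventually.of_forall fun t => (hu2 t).symm)
    have hv2i : Integrable (fun t => (Real.sqrt (|Kh K h (t - y)|) * |d t|)^2) :=
      (hd2Kh_int y).congr (Filter.Eventually.of_forall fun t => (hv2 t).symm)
    have huvi : Integrable (fun t => Real.sqrt (|Kh K h (t - y)|)
        * (Real.sqrt (|Kh K h (t - y)|) * |d t|)) :=
      (habs_int y).congr (Filter.Eventually.of_forall fun t => (hus t).symm)
    have hCS0 := integral_CS volume (fun t => Real.sqrt (|Kh K h (t - y)|))
      (fun t => Real.sqrt (|Kh K h (t - y)|) * |d t|)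
      (fun t => Real.sqrt_nonneg _) (fun t => mul_nonneg (Real.sqrt_nonneg _) (abs_nonneg _))
      hu2i hv2i huvi
    have hCS : (∫ t, |Kh K h (t - y)| * |d t|)^2 ≤ (∫ t, |Kh K h (t - y)|) * J y := by
      calc (∫ t, |Kh K h (t - y)| * |d t|)^2
          = (∫ t, Real.sqrt (|Kh K h (t - y)|) * (Real.sqrt (|Kh K h (t - y)|) * |d t|))^2 := by
            rw [integral_congr_ae (Filter.Eventually.of_forall fun t => hus t)]
      _ ≤ (∫ t, (Real.sqrt (|Kh K h (t - y)|))^2)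
            * ∫ t, (Real.sqrt (|Kh K h (t - y)|) * |d t|)^2 := hCS0
      _ = (∫ t, |Kh K h (t - y)|) * J y := by
            rw [integral_congr_ae (Filter.Eventually.of_forall fun t => hu2 t),
              integral_congr_ae (Filter.Eventually.of_forall fun t => hv2 t), hJdef]
    calc g y^2 = |g y|^2 := (sq_abs _).symm
    _ ≤ (∫ t, |Kh K h (t - y)| * |d t|)^2 := pow_le_pow_left₀ (abs_nonneg _) h1 2
    _ ≤ (∫ t, |Kh K h (t - y)|) * J y := hCS
    _ = L1N K * J y := by rw [hKh_shift_r h hh y]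
  have hg2int : Integrable (fun y => g y^2) := by
    refine (hJint.const_mul (L1N K)).mono' ((hgm.pow_const 2).aestronglyMeasurable) ?_
    refine Filter.Eventually.of_forall fun y => ?_
    rw [Real.norm_eq_abs, abs_of_nonneg (sq_nonneg _)]
    exact hg2bd_pt y
  have hg2 : (∫ y, g y^2) ≤ L1N K * (L1N K * ∫ t, d t^2) := by
    calc (∫ y, g y^2) ≤ ∫ y, L1N K * J y :=
          integral_mono hg2int (hJint.const_mul _) hg2bd_pt
    _ = L1N K * ∫ y, J y := integral_const_mul _ _
    _ = L1N K * (L1N K * ∫ t, d t^2) := by rw [hJswap]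
  -- moments under P
  set m : ℝ := ∫ y, g y * f y with hmdef
  have hmom1 : ∀ i, ∫ ω, g (X i ω) ∂P = m := by
    intro i
    calc ∫ ω, g (X i ω) ∂P = ∫ y, g y ∂(Measure.map (X i) P) :=
          (integral_map (hXm i).aemeasurable hgm.aestronglyMeasurable).symm
    _ = ∫ y, g y ∂(volume.withDensity fun y => ((f y).toNNReal : ℝ≥0∞)) := by rw [hXd i]; rfl
    _ = ∫ y, (f y).toNNReal • g y := integral_withDensity_eq_integral_smul hfm.real_toNNReal _
    _ = m := by
        rw [hmdef]
        refine integral_congr_ae (Filter.Eventually.of_forall fun y => ?_)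
        simp only [NNReal.smul_def, smul_eq_mul]
        rw [Real.coe_toNNReal _ (hf0 y)]
        ring
  have hmom2 : ∀ i, ∫ ω, (g (X i ω))^2 ∂P = ∫ y, g y^2 * f y := by
    intro i
    calc ∫ ω, (g (X i ω))^2 ∂P = ∫ y, g y^2 ∂(Measure.map (X i) P) :=
          (integral_map (hXm i).aemeasurable ((hgm.pow_const 2).aestronglyMeasurable)).symm
    _ = ∫ y, g y^2 ∂(volume.withDensity fun y => ((f y).toNNReal : ℝ≥0∞)) := by rw [hXd i]; rfl
    _ = ∫ y, (f y).toNNReal • (g y^2) := integral_withDensity_eq_integral_smul hfm.real_toNNReal _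
    _ = ∫ y, g y^2 * f y := by
        refine integral_congr_ae (Filter.Eventually.of_forall fun y => ?_)
        simp only [NNReal.smul_def, smul_eq_mul]
        rw [Real.coe_toNNReal _ (hf0 y)]
        ring
  have hgsqf_int : Integrable (fun y => g y^2 * f y) := by
    have h2 : Integrable (fun y => f y * g y^2) :=
      Integrable.bdd_mul (hg2int) hfm.aestronglyMeasurable
        (by filter_upwards [hMae] with y hy; rwa [Real.norm_eq_abs])
    exact h2.congr (Filter.Eventually.of_forall fun y => mul_comm _ _)
  have hmomf : (∫ y, g y^2 * f y) ≤ M * (L1N K * (L1N K * ∫ t, d t^2)) := by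
    calc (∫ y, g y^2 * f y) ≤ ∫ y, M * g y^2 := by
          refine integral_mono_ae hgsqf_int (hg2int.const_mul M) ?_
          filter_upwards [hMae] with y hy
          have hfy : f y ≤ M := le_trans (le_abs_self _) hy
          calc g y^2 * f y ≤ g y^2 * M := mul_le_mul_of_nonneg_left hfy (sq_nonneg _)
          _ = M * g y^2 := mul_comm _ _
    _ = M * ∫ y, g y^2 := integral_const_mul _ _
    _ ≤ M * (L1N K * (L1N K * ∫ t, d t^2)) := mul_le_mul_of_nonneg_left hg2 hM0
  -- the constant term and Fubini
  have hfb_d_int : Integrable (fun t => fbar K f h t * d t) :=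
    Integrable.bdd_mul hdint (hfbarm h).aestronglyMeasurable
      (Filter.Eventually.of_forall fun t => by rw [Real.norm_eq_abs]; exact hfbar_bd h hh t)
  set cst : ℝ := ∫ t, fbar K f h t * d t with hcst
  have hHmeas : AEStronglyMeasurable (fun p : ℝ × ℝ => Kh K h (p.1 - p.2) * f p.2 * d p.1)
      (volume.prod volume) :=
    ((((hKhm h).comp (measurable_fst.sub measurable_snd)).mul (hfm.comp measurable_snd)).mul
      (hdm.comp measurable_fst)).aestronglyMeasurable
  have hHprod : Integrable (fun p : ℝ × ℝ => Kh K h (p.1 - p.2) * f p.2 * d p.1)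
      (volume.prod volume) := by
    rw [integrable_prod_iff' hHmeas]
    constructor
    · refine Filter.Eventually.of_forall fun y => ?_
      have h1 : Integrable (fun t => (Kh K h (t - y) * d t) * f y) := (hgint_pt y).mul_const _
      refine h1.congr (Filter.Eventually.of_forall fun t => ?_)
      show Kh K h (t - y) * d t * f y = _
      simp only
      ring
    · have hsm2 : StronglyMeasurable (fun y => ∫ t, ‖Kh K h (t - y) * f y * d t‖) :=
        StronglyMeasurable.integral_prod_left'
          (f := fun p : ℝ × ℝ => ‖Kh K h (p.1 - p.2) * f p.2 * d p.1‖)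
          (((((hKhm h).comp (measurable_fst.sub measurable_snd)).mul
            (hfm.comp measurable_snd)).mul (hdm.comp measurable_fst)).norm.stronglyMeasurable)
      refine Integrable.mono' (hfint.abs.const_mul (L1N K * DD)) hsm2.aestronglyMeasurable ?_
      refine Filter.Eventually.of_forall fun y => ?_
      rw [Real.norm_eq_abs, abs_of_nonneg (integral_nonneg fun t => norm_nonneg _)]
      have heqn : (fun t => ‖Kh K h (t - y) * f y * d t‖)
          = fun t => (|Kh K h (t - y)| * |d t|) * |f y| := by
        funext t
        rw [Real.norm_eq_abs, abs_mul, abs_mul]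
        ring
      rw [heqn, integral_mul_const]
      exact mul_le_mul_of_nonneg_right (hconv_bd y) (abs_nonneg _)
  have hcst_m : cst = m := by
    have hswap : (∫ t, ∫ y, Kh K h (t - y) * f y * d t) = ∫ y, ∫ t, Kh K h (t - y) * f y * d t :=
      integral_integral_swap (f := fun t y => Kh K h (t - y) * f y * d t) hHprod
    calc cst = ∫ t, fbar K f h t * d t := hcst
    _ = ∫ t, ∫ y, Kh K h (t - y) * f y * d t := by
        refine integral_congr_ae (Filter.Eventually.of_forall fun t => ?_)
        show fbar K f h t * d t = ∫ y, Kh K h (t - y) * f y * d t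
        rw [fbar, ← integral_mul_const]
    _ = ∫ y, ∫ t, Kh K h (t - y) * f y * d t := hswap
    _ = ∫ y, g y * f y := by
        refine integral_congr_ae (Filter.Eventually.of_forall fun y => ?_)
        show (∫ t, Kh K h (t - y) * f y * d t) = g y * f y
        rw [show (fun t => Kh K h (t - y) * f y * d t) = fun t => (Kh K h (t - y) * d t) * f y from
          funext fun t => by ring, integral_mul_const, hgdef]
    _ = m := hmdef.symm
  -- representation of Vstat
  have hVrep : ∀ Y : Fin n → ℝ, Vstat K f n Y h h' = (1/n : ℝ) * ∑ i, (g (Y i) - cst) := by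
    intro Y
    have hinteg : ∀ i : Fin n, Integrable (fun t => (Kh K h (t - Y i) - fbar K f h t) * d t) := by
      intro i
      rw [show (fun t => (Kh K h (t - Y i) - fbar K f h t) * d t)
          = fun t => Kh K h (t - Y i) * d t - fbar K f h t * d t from funext fun t => by ring]
      exact (hgint_pt (Y i)).sub hfb_d_int
    have hpt : ∀ t : ℝ, (fhat K h n Y t - fbar K f h t) * d t
        = (1/n : ℝ) * ∑ i, ((Kh K h (t - Y i) - fbar K f h t) * d t) := by
      intro t
      have hsum : ∑ i : Fin n, ((Kh K h (t - Y i) - fbar K f h t) * d t)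
          = (∑ i, Kh K h (t - Y i)) * d t - n * (fbar K f h t * d t) := by
        simp only [sub_mul]
        rw [Finset.sum_sub_distrib, ← Finset.sum_mul, Finset.sum_const, Finset.card_univ,
          Fintype.card_fin, nsmul_eq_mul]
      rw [hsum, fhat]
      field_simp
    calc Vstat K f n Y h h' = ∫ t, (fhat K h n Y t - fbar K f h t) * d t := by rw [hd]; rfl
    _ = ∫ t, (1/n : ℝ) * ∑ i, ((Kh K h (t - Y i) - fbar K f h t) * d t) :=
        integral_congr_ae (Filter.Eventually.of_forall fun t => hpt t)
    _ = (1/n : ℝ) * ∫ t, ∑ i, ((Kh K h (t - Y i) - fbar K f h t) * d t) := integral_const_mul _ _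
    _ = (1/n : ℝ) * ∑ i, ∫ t, ((Kh K h (t - Y i) - fbar K f h t) * d t) := by
        rw [integral_finset_sum Finset.univ (fun i _ => hinteg i)]
    _ = (1/n : ℝ) * ∑ i, (g (Y i) - cst) := by
        congr 1
        refine Finset.sum_congr rfl fun i _ => ?_
        rw [show (fun t => (Kh K h (t - Y i) - fbar K f h t) * d t)
          = fun t => Kh K h (t - Y i) * d t - fbar K f h t * d t from funext fun t => by ring,
          integral_sub (hgint_pt (Y i)) hfb_d_int, hgdef, hcst]
  -- the thresholds
  set σ2 : ℝ := M * (L1N K)^2 * L2sq d with hσ2def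
  have hL2eq : L2sq d = ∫ t, d t^2 := rfl
  have hL2nonneg : 0 ≤ L2sq d := by
    rw [hL2eq]; exact integral_nonneg fun t => sq_nonneg _
  have hmom2bound : ∀ i, ∫ ω, (g (X i ω))^2 ∂P ≤ σ2 := by
    intro i
    rw [hmom2 i]
    refine hmomf.trans (le_of_eq ?_)
    rw [hσ2def, hL2eq]
    ring
  set r1 : ℝ := Real.sqrt (2 * x / ↑n * M * L1N K ^ 2 * L2sq d) with hr1
  set r2 : ℝ := x * M * L1N K * (1 + L1N K) / (3 * ↑n) with hr2
  have hr2nn : 0 ≤ r2 := by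
    rw [hr2]
    refine div_nonneg ?_ (by positivity)
    have := mul_nonneg (mul_nonneg (mul_nonneg hx.le hM0) hKnorm)
      (by linarith : (0:ℝ) ≤ 1 + L1N K)
    linarith
  have hEvent : {ω | |Vstat K f n (fun i => X i ω) h h'| ≤ r1 + r2}
      = {ω | |(1/n : ℝ) * ∑ i, (g (X i ω) - m)| ≤ r1 + r2} := by
    ext ω
    simp only [Set.mem_setOf_eq]
    rw [hVrep (fun i => X i ω), hcst_m]
  rcases eq_or_lt_of_le hL2nonneg with hzero | hposL2
  · -- degenerate case : d = 0 a.e.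
    have hd0 : d =ᵐ[volume] 0 := by
      have h1 : (fun t => d t^2) =ᵐ[volume] 0 :=
        (integral_eq_zero_iff_of_nonneg (fun t => sq_nonneg _) hd2int).mp
          (by rw [← hL2eq]; exact hzero.symm)
      filter_upwards [h1] with t ht
      have ht' : d t ^ 2 = 0 := ht
      have := pow_eq_zero_iff (n := 2) (by norm_num) |>.mp ht'
      simpa using this
    have hV0 : ∀ ω : Ω, Vstat K f n (fun i => X i ω) h h' = 0 := by
      intro ω
      have h0 : Vstat K f n (fun i => X i ω) h h'
          = ∫ t, (fhat K h n (fun i => X i ω) t - fbar K f h t) * d t := by rw [hd]; rfl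
      rw [h0]
      have h1 : (fun t => (fhat K h n (fun i => X i ω) t - fbar K f h t) * d t)
          =ᵐ[volume] 0 := by
        filter_upwards [hd0] with t ht
        simp [ht]
      rw [integral_congr_ae h1]
      simp
    have hEuniv : {ω | |Vstat K f n (fun i => X i ω) h h'| ≤ r1 + r2} = Set.univ := by
      ext ω
      simp only [Set.mem_setOf_eq, Set.mem_univ, iff_true]
      rw [hV0 ω, abs_zero]
      have := Real.sqrt_nonneg (2 * x / ↑n * M * L1N K ^ 2 * L2sq d)
      rw [← hr1] at this
      linarith
    rw [hEuniv, measure_univ]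
    exact tsub_le_self
  · -- main case
    have hσ2pos : 0 < σ2 := by
      rw [hσ2def]
      exact mul_pos (mul_pos hMpos (pow_pos hKpos 2)) hposL2
    have hnr : (n:ℝ) * (r1 + r2) = Real.sqrt (2 * σ2 * x * ↑n) + B * x / 3 := by
      have e1 : (n:ℝ) * r1 = Real.sqrt (2 * σ2 * x * ↑n) := by
        rw [hr1, show (n:ℝ) * Real.sqrt (2 * x / ↑n * M * L1N K ^ 2 * L2sq d)
            = Real.sqrt ((n:ℝ)^2 * (2 * x / ↑n * M * L1N K ^ 2 * L2sq d)) from by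
          rw [Real.sqrt_mul (sq_nonneg _), Real.sqrt_sq hnR.le]]
        congr 1
        rw [hσ2def]
        field_simp
      have e2 : (n:ℝ) * r2 = B * x / 3 := by
        rw [hr2, hB]
        field_simp
      rw [mul_add, e1, e2]
    have hbern1 := bernstein_one_side P n hn (fun i ω => g (X i ω))
      (fun i => hgm.comp (hXm i))
      (hindep.comp (fun _ => g) (fun _ => hgm)) B σ2 m hBpos hσ2pos
      (fun i ω => hgbd _) hmom1 hmom2bound x hx
    have hbern2 := bernstein_one_side P n hn (fun i ω => -g (X i ω))
      (fun i => (hgm.comp (hXm i)).neg)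
      (hindep.comp (fun _ => fun y => -g y) (fun _ => hgm.neg)) B σ2 (-m) hBpos hσ2pos
      (fun i ω => by rw [abs_neg]; exact hgbd _)
      (fun i => by rw [integral_neg, hmom1 i])
      (fun i => by
        calc ∫ ω, (-g (X i ω))^2 ∂P = ∫ ω, (g (X i ω))^2 ∂P := by
              refine integral_congr_ae (Filter.Eventually.of_forall fun ω => ?_)
              simp [neg_pow]
        _ ≤ σ2 := hmom2bound i) x hx
    have hSmeas : Measurable (fun ω => ∑ i, (g (X i ω) - m)) :=
      Finset.measurable_sum _ (fun i _ => (hgm.comp (hXm i)).sub measurable_const)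
    have hEmeas : MeasurableSet {ω | |(1/n : ℝ) * ∑ i, (g (X i ω) - m)| ≤ r1 + r2} :=
      measurableSet_le (measurable_const.mul hSmeas).abs measurable_const
    have hsub : {ω | |(1/n : ℝ) * ∑ i, (g (X i ω) - m)| ≤ r1 + r2}ᶜ ⊆
        {ω | Real.sqrt (2 * σ2 * x * ↑n) + B * x / 3 ≤ ∑ i, (g (X i ω) - m)} ∪
        {ω | Real.sqrt (2 * σ2 * x * ↑n) + B * x / 3 ≤ ∑ i, (-g (X i ω) - -m)} := by
      intro ω hω
      simp only [Set.mem_compl_iff, Set.mem_setOf_eq, not_le] at hω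
      have h1 : (n:ℝ) * (r1 + r2) < |∑ i, (g (X i ω) - m)| := by
        have h2 : |(1/n : ℝ) * ∑ i, (g (X i ω) - m)|
            = (1/n : ℝ) * |∑ i, (g (X i ω) - m)| := by
          rw [abs_mul, abs_of_pos (by positivity : (0:ℝ) < (1/n : ℝ))]
        rw [h2] at hω
        calc (n:ℝ) * (r1 + r2) < (n:ℝ) * ((1/n : ℝ) * |∑ i, (g (X i ω) - m)|) := by
              exact (mul_lt_mul_iff_right₀ hnR).mpr hω
        _ = |∑ i, (g (X i ω) - m)| := by field_simp
      rw [hnr] at h1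
      rcases le_abs.mp h1.le with h2 | h2
      · left
        exact h2
      · right
        simp only [Set.mem_setOf_eq]
        have h3 : -∑ i, (g (X i ω) - m) = ∑ i, (-g (X i ω) - -m) := by
          rw [← Finset.sum_neg_distrib]
          exact Finset.sum_congr rfl fun i _ => by ring
        rw [h3] at h2
        exact h2
    have hcompl : P ({ω | |(1/n:ℝ) * ∑ i, (g (X i ω) - m)| ≤ r1 + r2}ᶜ)
        ≤ ENNReal.ofReal (2 * Real.exp (-x)) := by
      refine (measure_mono hsub).trans ?_
      refine (measure_union_le _ _).trans ?_
      refine (add_le_add hbern1 hbern2).trans ?_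
      rw [← ENNReal.ofReal_add (Real.exp_pos _).le (Real.exp_pos _).le]
      exact le_of_eq (by congr 1; ring)
    rw [hEvent]
    have hcomb := measure_add_measure_compl (μ := P) hEmeas
    rw [measure_univ] at hcomb
    rw [ge_iff_le, tsub_le_iff_right]
    calc (1:ℝ≥0∞) = P {ω | |(1/n:ℝ) * ∑ i, (g (X i ω) - m)| ≤ r1 + r2}
        + P ({ω | |(1/n:ℝ) * ∑ i, (g (X i ω) - m)| ≤ r1 + r2}ᶜ) := hcomb.symm
    _ ≤ P {ω | |(1/n:ℝ) * ∑ i, (g (X i ω) - m)| ≤ r1 + r2}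
        + ENNReal.ofReal (2 * Real.exp (-x)) := add_le_add le_rfl hcompl

end
end
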